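/- arXiv:math/0511483 — 5 statements merged into one kernel-verified Lean document; each statement's English description precedes it below -/
import Mathlib

section
/- Let α ∈ ℕⁿ be a nonzero multiindex. There is a constant C > 0 such that for all ε ∈ (0, 1/2], ∫_{Δ \ Δ_ε^α} (|ζ₁|⋯|ζₙ|)^{-1} dλ(ζ) ≤ C · ε^{1/(2|α|)} · (log(1/ε))^{n-1}. -/
open MeasureTheory Set

open scoped ENNReal

section Aux

lemma my_lintegral_pi_prod : ∀ {n : ℕ} (g : Fin n → ℂ → ℝ≥0∞), (∀ j, Measurable (g j)) →
    ∫⁻ ζ : Fin n → ℂ, ∏ j, g j (ζ j) = ∏ j, ∫⁻ z, g j z := by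
  intro n
  induction n with
  | zero =>
    intro g hg
    simp only [Finset.univ_eq_empty, Finset.prod_empty, lintegral_const, one_mul]
    rw [volume_pi, Measure.pi_univ]
    simp
  | succ n ih =>
    intro g hg
    have hmp := measurePreserving_piFinSuccAbove (fun _ : Fin (n+1) => (volume : Measure ℂ)) 0
    have hpm : Measurable (fun w : Fin n → ℂ => ∏ j, g j.succ (w j)) :=
      Finset.measurable_prod Finset.univ fun j _ => (hg j.succ).comp (measurable_pi_apply j)
    have hGmeas : Measurable (fun p : ℂ × (Fin n → ℂ) => g 0 p.1 * ∏ j, g j.succ (p.2 j)) :=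
      ((hg 0).comp measurable_fst).mul (hpm.comp measurable_snd)
    have key : ∫⁻ ζ : Fin (n+1) → ℂ, ∏ j, g j (ζ j)
        = ∫⁻ p : ℂ × (Fin n → ℂ), g 0 p.1 * ∏ j, g j.succ (p.2 j)
            ∂((volume : Measure ℂ).prod (Measure.pi fun _ => (volume : Measure ℂ))) := by
      rw [volume_pi, ← hmp.lintegral_comp hGmeas]
      congr 1
      funext ζ
      simp [MeasurableEquiv.piFinSuccAbove, Fin.prod_univ_succ, Fin.succAbove_zero, Fin.tail]
    rw [key,
      lintegral_prod_mul (f := fun z : ℂ => g 0 z) (g := fun w : Fin n → ℂ => ∏ j, g j.succ (w j))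
        (hg 0).aemeasurable hpm.aemeasurable,
      ← volume_pi, ih (fun j => g j.succ) (fun j => hg j.succ), Fin.prod_univ_succ]

lemma my_ofReal_pi : ((NNReal.pi : ℝ≥0∞)) = ENNReal.ofReal Real.pi := by
  rw [← NNReal.coe_real_pi, ENNReal.ofReal_coe_nnreal]

lemma my_vol_ball (R : ℝ) (hR : 0 ≤ R) :
    volume (Metric.ball (0:ℂ) R) = ENNReal.ofReal (R ^ 2 * Real.pi) := by
  rw [Complex.volume_ball, my_ofReal_pi, ← ENNReal.ofReal_pow hR,
    ← ENNReal.ofReal_mul (by positivity)]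

lemma my_vol_closedBall (R : ℝ) (hR : 0 ≤ R) :
    volume (Metric.closedBall (0:ℂ) R) = ENNReal.ofReal (R ^ 2 * Real.pi) := by
  rw [Complex.volume_closedBall, my_ofReal_pi, ← ENNReal.ofReal_pow hR,
    ← ENNReal.ofReal_mul (by positivity)]

lemma my_radial_bound {c : ℝ} (hc0 : 0 < c) (hc2 : c < 2) {R : ℝ} (hR : 0 < R) :
    ∫⁻ z in Metric.ball (0:ℂ) R, ENNReal.ofReal (‖z‖ ^ (-c)) ≤
      ENNReal.ofReal (2 * Real.pi * R ^ (2 - c) / (2 - c)) := by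
  have hcne : c ≠ 0 := hc0.ne'
  have h2c : 0 < 2 - c := by linarith
  set A : ℝ := R ^ (-c) with hA
  have hApos : 0 < A := Real.rpow_pos_of_pos hR _
  set p : ℝ := 2 * (-c⁻¹) with hp
  have hp1 : p < -1 := by
    have h21 : 1 < 2 * c⁻¹ := by rw [← div_eq_mul_inv]; exact (one_lt_div hc0).mpr hc2
    simp only [hp]
    linarith
  have hpne : p + 1 ≠ 0 := by intro h; linarith
  have hAR : A ^ (-c⁻¹) = R := by
    rw [hA, ← Real.rpow_mul hR.le]
    rw [show (-c) * (-c⁻¹) = 1 by field_simp, Real.rpow_one]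
  have hmeas : Measurable (fun z : ℂ => ‖z‖ ^ (-c)) := by fun_prop
  have hnn : ∀ z : ℂ, 0 ≤ ‖z‖ ^ (-c) := fun z => Real.rpow_nonneg (norm_nonneg z) _
  rw [lintegral_eq_lintegral_meas_le _ (ae_of_all _ hnn) hmeas.aemeasurable]
  have hres : ∀ t : ℝ, (volume.restrict (Metric.ball (0:ℂ) R)) {a | t ≤ ‖a‖ ^ (-c)}
      = volume ({a : ℂ | t ≤ ‖a‖ ^ (-c)} ∩ Metric.ball 0 R) := fun t =>
    Measure.restrict_apply (measurableSet_le measurable_const hmeas)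
  have hset : ∀ t : ℝ, 0 < t → {a : ℂ | t ≤ ‖a‖ ^ (-c)} =
      Metric.closedBall (0:ℂ) (t ^ (-c⁻¹)) \ {0} := by
    intro t ht
    ext z
    simp only [mem_setOf_eq, mem_diff, Metric.mem_closedBall, dist_zero_right, mem_singleton_iff]
    by_cases hz : z = 0
    · subst hz
      simp only [norm_zero, Real.zero_rpow (neg_ne_zero.mpr hcne)]
      simp [not_le.mpr ht]
    · have hzpos : 0 < ‖z‖ := norm_pos_iff.mpr hz
      have : (t ≤ ‖z‖ ^ (-c)) ↔ ‖z‖ ≤ t ^ (-c⁻¹) := by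
        rw [Real.rpow_neg (norm_nonneg z), le_inv_comm₀ ht (Real.rpow_pos_of_pos hzpos c),
          ← Real.le_rpow_inv_iff_of_pos (norm_nonneg z) (inv_nonneg.mpr ht.le) hc0,
          Real.inv_rpow ht.le, ← Real.rpow_neg ht.le]
      rw [this]
      simp [hz]
  have disj : Disjoint (Ioc (0:ℝ) A) (Ioi A) := Ioc_disjoint_Ioi le_rfl
  rw [← Ioc_union_Ioi_eq_Ioi hApos.le, lintegral_union measurableSet_Ioi disj]
  have piece1 : ∫⁻ t in Ioc (0:ℝ) A, (volume.restrict (Metric.ball (0:ℂ) R)) {a | t ≤ ‖a‖ ^ (-c)}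
      = ENNReal.ofReal (R ^ 2 * Real.pi * A) := by
    have h1 : ∀ t ∈ Ioc (0:ℝ) A,
        (volume.restrict (Metric.ball (0:ℂ) R)) {a | t ≤ ‖a‖ ^ (-c)}
          = ENNReal.ofReal (R ^ 2 * Real.pi) := by
      intro t ht
      have hρ : R ≤ t ^ (-c⁻¹) := by
        have h := Real.rpow_le_rpow_of_nonpos (z := -c⁻¹) ht.1 ht.2 (neg_nonpos.mpr (by positivity))
        rwa [hAR] at h
      rw [hres t]
      have hseteq : {a : ℂ | t ≤ ‖a‖ ^ (-c)} ∩ Metric.ball 0 R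
          = Metric.ball (0:ℂ) R \ {0} := by
        rw [hset t ht.1]
        ext z
        simp only [mem_inter_iff, mem_diff, Metric.mem_closedBall, Metric.mem_ball,
          dist_zero_right, mem_singleton_iff]
        constructor
        · rintro ⟨⟨_, hz⟩, hzR⟩; exact ⟨hzR, hz⟩
        · rintro ⟨hzR, hz⟩; exact ⟨⟨le_trans hzR.le hρ, hz⟩, hzR⟩
      rw [hseteq, measure_diff_null (measure_singleton 0), my_vol_ball R hR.le]
    rw [setLIntegral_congr_fun measurableSet_Ioc h1, setLIntegral_const,
      Real.volume_Ioc, ← ENNReal.ofReal_mul (by positivity)]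
    norm_num
  have piece2 : ∫⁻ t in Ioi A, (volume.restrict (Metric.ball (0:ℂ) R)) {a | t ≤ ‖a‖ ^ (-c)}
      = ENNReal.ofReal ((-A ^ (p+1) / (p+1)) * Real.pi) := by
    have h2 : ∀ t ∈ Ioi A,
        (volume.restrict (Metric.ball (0:ℂ) R)) {a | t ≤ ‖a‖ ^ (-c)}
          = ENNReal.ofReal (t ^ p * Real.pi) := by
      intro t ht
      have htpos : 0 < t := hApos.trans ht
      have hρ : t ^ (-c⁻¹) < R := by
        have h := Real.rpow_lt_rpow_of_neg (z := -c⁻¹) hApos ht (neg_lt_zero.mpr (by positivity))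
        rwa [hAR] at h
      rw [hres t, hset t htpos,
        Set.inter_eq_left.mpr (Set.diff_subset.trans (Metric.closedBall_subset_ball hρ)),
        measure_diff_null (measure_singleton 0),
        my_vol_closedBall _ (Real.rpow_nonneg htpos.le _)]
      congr 1
      rw [← Real.rpow_natCast (t ^ (-c⁻¹)) 2, ← Real.rpow_mul htpos.le]
      norm_num [hp, mul_comm]
    rw [setLIntegral_congr_fun measurableSet_Ioi h2]
    have h3 : ∀ t ∈ Ioi A, ENNReal.ofReal (t ^ p * Real.pi)
        = ENNReal.ofReal (t ^ p) * ENNReal.ofReal Real.pi := fun t ht =>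
      ENNReal.ofReal_mul (Real.rpow_nonneg (hApos.trans ht).le _)
    rw [setLIntegral_congr_fun measurableSet_Ioi h3,
      lintegral_mul_const' _ _ ENNReal.ofReal_ne_top,
      ← ofReal_integral_eq_lintegral_ofReal (integrableOn_Ioi_rpow_of_lt hp1 hApos)
        ((ae_restrict_iff' measurableSet_Ioi).mpr (ae_of_all _ fun t ht =>
          Real.rpow_nonneg (hApos.trans ht).le _)),
      integral_Ioi_rpow_of_lt hp1 hApos,
      ← ENNReal.ofReal_mul (by
        have hA1 : 0 < A ^ (p+1) := Real.rpow_pos_of_pos hApos _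
        have hneg : p + 1 < 0 := by linarith
        exact (div_pos_of_neg_of_neg (neg_neg_of_pos hA1) hneg).le)]
  rw [piece1, piece2]
  have e2 : A ^ (p+1) = R ^ (2-c) := by
    rw [hA, ← Real.rpow_mul hR.le]
    congr 1
    rw [hp]; field_simp; ring
  rw [← ENNReal.ofReal_add (by positivity) (by
      have hA1 : 0 < A ^ (p+1) := Real.rpow_pos_of_pos hApos _
      have hneg : p + 1 < 0 := by linarith
      have : 0 < -A ^ (p+1) / (p+1) := div_pos_of_neg_of_neg (by linarith) hneg
      positivity)]
  apply ENNReal.ofReal_le_ofReal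
  apply le_of_eq
  have e1 : R ^ 2 * A = R ^ (2 - c) := by
    rw [hA, ← Real.rpow_natCast R 2, ← Real.rpow_add hR]
    ring_nf
  have hc2ne : (2:ℝ) - c ≠ 0 := by linarith
  have hcm2 : c - 2 ≠ 0 := by linarith
  rw [e2, mul_comm (R^2 * Real.pi) A, ← mul_assoc, mul_comm A (R^2), e1]
  have hpval : p + 1 = (c - 2) / c := by rw [hp]; field_simp; ring
  rw [hpval]
  field_simp
  ring

lemma my_prod_bound {n : ℕ} (ρ cc : Fin n → ℝ) (hρ : ∀ j, 0 < ρ j)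
    (hc : ∀ j, 0 < cc j) (hc2 : ∀ j, cc j < 2) :
    ∫⁻ ζ : Fin n → ℂ, ∏ j, (Metric.ball (0:ℂ) (ρ j)).indicator
        (fun z => ENNReal.ofReal (‖z‖ ^ (-(cc j)))) (ζ j)
      ≤ ENNReal.ofReal (∏ j, (2 * Real.pi * (ρ j) ^ (2 - cc j) / (2 - cc j))) := by
  have hmeas : ∀ j, Measurable ((Metric.ball (0:ℂ) (ρ j)).indicator
      (fun z => ENNReal.ofReal (‖z‖ ^ (-(cc j))))) := fun j =>
    (Measurable.indicator (by fun_prop) measurableSet_ball)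
  rw [my_lintegral_pi_prod _ hmeas,
    ENNReal.ofReal_prod_of_nonneg (fun j _ => by
      have h2c : (0:ℝ) < 2 - cc j := by linarith [hc2 j]
      exact div_nonneg (mul_nonneg (by positivity) (Real.rpow_nonneg (hρ j).le _)) h2c.le)]
  refine Finset.prod_le_prod' fun j _ => ?_
  rw [lintegral_indicator measurableSet_ball]
  exact my_radial_bound (hc j) (hc2 j) (hρ j)

lemma my_final_arith {K : ℝ} (hK : 0 ≤ K) (n : ℕ) (q : ℝ) {ε : ℝ}
    (hε0 : 0 < ε) (hε2 : ε ≤ 1/2) :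
    ε ^ q * K ≤ (K / Real.log 2 ^ (n-1)) * ε ^ q * (Real.log (1/ε)) ^ (n-1) := by
  have hlog2 : 0 < Real.log 2 := Real.log_pos one_lt_two
  have h2 : (2:ℝ) ≤ 1/ε := by rw [le_div_iff₀ hε0]; linarith
  have hlog : Real.log 2 ≤ Real.log (1/ε) := Real.log_le_log two_pos h2
  have h1 : Real.log 2 ^ (n-1) ≤ Real.log (1/ε) ^ (n-1) := pow_le_pow_left₀ hlog2.le hlog _
  calc ε^q * K = K * ε^q := mul_comm _ _
    _ ≤ (K / Real.log 2 ^ (n-1) * Real.log (1/ε) ^ (n-1)) * ε^q := by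
        refine mul_le_mul_of_nonneg_right ?_ (Real.rpow_nonneg hε0.le q)
        rw [div_mul_eq_mul_div, le_div_iff₀ (pow_pos hlog2 _)]
        exact mul_le_mul_of_nonneg_left h1 hK
    _ = (K / Real.log 2 ^ (n-1)) * ε^q * (Real.log (1/ε))^(n-1) := by ring

lemma my_pointwise_A {n : ℕ} (α : Fin n → ℕ) {N : ℝ} (hN : 0 < N) {ε : ℝ} (hε0 : 0 < ε)
    (r : Fin n → ℝ) (hr : ∀ j, 0 ≤ r j)
    (hP : (∏ j, r j ^ α j) ^ 2 < ε) :
    ∏ j, (r j)⁻¹ ≤ ε ^ (1/(2*N)) * ∏ j, (r j) ^ (-(1 + (α j:ℝ)/N)) := by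
  by_cases hz : ∀ j, 0 < r j
  · have hPn : 0 ≤ ∏ j, r j ^ α j := Finset.prod_nonneg fun j _ => pow_nonneg (hr j) _
    have h1 : ∏ j, r j ^ α j < ε ^ ((1:ℝ)/2) := by
      have h := (Real.lt_sqrt hPn).mpr hP
      rwa [Real.sqrt_eq_rpow] at h
    set B : ℝ := ∏ j, (r j) ^ ((α j : ℝ)/N) with hBdef
    have eB : B = (∏ j, r j ^ α j) ^ ((1:ℝ)/N) := by
      rw [hBdef, ← Real.finset_prod_rpow _ _ (fun j _ => pow_nonneg (hr j) _) _]
      refine Finset.prod_congr rfl fun j _ => ?_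
      rw [← Real.rpow_natCast (r j) (α j), ← Real.rpow_mul (hr j), mul_one_div]
    have hBpos : 0 < B := Finset.prod_pos fun j _ => Real.rpow_pos_of_pos (hz j) _
    have hB : B ≤ ε ^ (1/(2*N)) := by
      rw [eB]
      have h2 : (∏ j, r j ^ α j) ^ ((1:ℝ)/N) ≤ (ε ^ ((1:ℝ)/2)) ^ ((1:ℝ)/N) :=
        Real.rpow_le_rpow hPn h1.le (by positivity)
      rwa [← Real.rpow_mul hε0.le,
        show (1:ℝ)/2 * (1/N) = 1/(2*N) by rw [div_mul_div_comm, one_mul]] at h2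
    have claim1 : ∏ j, (r j) ^ (-(1 + (α j:ℝ)/N)) = (∏ j, (r j)⁻¹) * B⁻¹ := by
      rw [hBdef, ← Finset.prod_inv_distrib, ← Finset.prod_mul_distrib]
      refine Finset.prod_congr rfl fun j _ => ?_
      rw [show -(1 + (α j:ℝ)/N) = (-1) + (-((α j:ℝ)/N)) by ring,
        Real.rpow_add (hz j), Real.rpow_neg_one, Real.rpow_neg (hr j)]
    rw [claim1]
    have hprodnn : 0 ≤ ∏ j, (r j)⁻¹ := Finset.prod_nonneg fun j _ => inv_nonneg.mpr (hr j)
    calc ∏ j, (r j)⁻¹ = (∏ j, (r j)⁻¹) * 1 := (mul_one _).symm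
      _ ≤ (∏ j, (r j)⁻¹) * (ε ^ (1/(2*N)) / B) :=
          mul_le_mul_of_nonneg_left ((one_le_div hBpos).mpr hB) hprodnn
      _ = ε ^ (1/(2*N)) * ((∏ j, (r j)⁻¹) * B⁻¹) := by ring
  · push_neg at hz
    obtain ⟨j, hj⟩ := hz
    have hj0 : r j = 0 := le_antisymm hj (hr j)
    rw [Finset.prod_eq_zero (Finset.mem_univ j) (by rw [hj0, inv_zero])]
    exact mul_nonneg (Real.rpow_nonneg hε0.le _)
      (Finset.prod_nonneg fun i _ => Real.rpow_nonneg (hr i) _)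

end Aux

section Main

set_option maxHeartbeats 1000000 in
lemma my_main_step {n : ℕ} (S : Set (Fin n → ℂ)) (hSmeas : MeasurableSet S)
    (f : (Fin n → ℂ) → ℝ≥0∞) (a : ℝ) (ha : 0 ≤ a) (ρ cc : Fin n → ℝ) (hρ : ∀ j, 0 < ρ j)
    (hc : ∀ j, 0 < cc j) (hc2 : ∀ j, cc j < 2)
    (hpt : ∀ ζ ∈ S, f ζ ≤ ENNReal.ofReal a * ∏ j, (Metric.ball (0:ℂ) (ρ j)).indicator
      (fun z => ENNReal.ofReal (‖z‖ ^ (-(cc j)))) (ζ j)) :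
    ∫⁻ ζ in S, f ζ ≤ ENNReal.ofReal (a * ∏ j, (2*Real.pi*(ρ j)^(2-cc j)/(2-cc j))) := by
  refine le_trans (setLIntegral_mono' hSmeas hpt) ?_
  refine le_trans (lintegral_mono' Measure.restrict_le_self le_rfl) ?_
  rw [lintegral_const_mul' _ _ ENNReal.ofReal_ne_top]
  refine le_trans (mul_le_mul_right (my_prod_bound ρ cc hρ hc hc2) _) ?_
  rw [← ENNReal.ofReal_mul ha]

/-- For a nonzero multiindex α, there is C > 0 such that for all
ε ∈ (0,1/2], the integral of (|ζ₁|⋯|ζₙ|)⁻¹ over Δ \ Δ_ε^α (Δ the unit polydisc,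
Δ_ε^α = {ζ ∈ Δ : |ζ^α|² ≥ ε}) is at most C·ε^(1/(2|α|))·(log(1/ε))^(n-1). -/
theorem stmt_4 {n : ℕ} (α : Fin n → ℕ) (hα : α ≠ 0) :
    ∃ C > (0:ℝ), ∀ ε ∈ Ioc (0:ℝ) (1/2),
      (∫⁻ ζ in {ζ : Fin n → ℂ | (∀ j, ‖ζ j‖ < 1) ∧
          ‖∏ j, ζ j ^ α j‖ ^ 2 < ε},
        ENNReal.ofReal (∏ j, ‖ζ j‖⁻¹)) ≤
      ENNReal.ofReal (C * ε ^ (1 / (2 * Real.sqrt (∑ j, (α j : ℝ) ^ 2))) *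
        (Real.log (1/ε)) ^ (n - 1)) := by
  classical
  have hNsum : 0 < ∑ j, (α j:ℝ)^2 := by
    obtain ⟨j, hj⟩ : ∃ j, α j ≠ 0 := by
      by_contra h; push_neg at h; exact hα (funext fun j => h j)
    have h0 : (0:ℝ) < (α j:ℝ)^2 := by
      have : 0 < (α j : ℝ) := by exact_mod_cast Nat.pos_of_ne_zero hj
      positivity
    exact lt_of_lt_of_le h0 (Finset.single_le_sum (f := fun i => ((α i:ℝ))^2) (fun i _ => by positivity) (Finset.mem_univ j))
  set N : ℝ := Real.sqrt (∑ j, (α j:ℝ)^2) with hN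
  have hNpos : 0 < N := Real.sqrt_pos.mpr hNsum
  have hNsq : N^2 = ∑ j, (α j:ℝ)^2 := Real.sq_sqrt hNsum.le
  have hle : ∀ j, (α j : ℝ) ≤ N := by
    intro j
    rw [hN]
    refine (Real.le_sqrt (by positivity) hNsum.le).mpr ?_
    exact Finset.single_le_sum (f := fun i => ((α i:ℝ))^2) (fun i _ => by positivity) (Finset.mem_univ j)
  have hSm : ∀ ε : ℝ, MeasurableSet {ζ : Fin n → ℂ | (∀ j, ‖ζ j‖ < 1) ∧
      ‖∏ j, ζ j ^ α j‖ ^ 2 < ε} := by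
    intro ε
    rw [Set.setOf_and]
    refine MeasurableSet.inter ?_ ?_
    · rw [Set.setOf_forall]
      exact MeasurableSet.iInter fun j =>
        measurableSet_lt ((measurable_pi_apply j).norm) measurable_const
    · exact measurableSet_lt
        (((Finset.measurable_prod Finset.univ fun j _ =>
          (measurable_pi_apply j).pow_const (α j)).norm).pow_const 2) measurable_const
  have habs : ∀ ζ : Fin n → ℂ, ‖∏ j, ζ j ^ α j‖ = ∏ j, ‖ζ j‖ ^ α j := by
    intro ζ
    rw [norm_prod]
    exact Finset.prod_congr rfl fun j _ => norm_pow _ _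
  have hlog2 : 0 < Real.log 2 := Real.log_pos one_lt_two
  set q : ℝ := 1 / (2 * N) with hq
  by_cases hcaseA : ∀ j, (α j:ℝ) < N
  · -- Case A : all exponents strictly below the Euclidean norm
    set K : ℝ := ∏ j, (2 * Real.pi / (1 - (α j:ℝ)/N)) with hK
    have hterm : ∀ j, 0 < 2 * Real.pi / (1 - (α j:ℝ)/N) := by
      intro j
      have h1 : (α j:ℝ)/N < 1 := (div_lt_one hNpos).mpr (hcaseA j)
      have h2 : 0 < 1 - (α j:ℝ)/N := by linarith
      positivity
    have hKpos : 0 < K := Finset.prod_pos fun j _ => hterm j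
    refine ⟨K / Real.log 2 ^ (n-1), by positivity, ?_⟩
    rintro ε ⟨hε0, hε2⟩
    set cc : Fin n → ℝ := fun j => 1 + (α j:ℝ)/N with hcc
    have hcc0 : ∀ j, 0 < cc j := fun j => by
      have h0 : 0 ≤ (α j:ℝ)/N := by positivity
      simp only [hcc]; linarith
    have hcc2 : ∀ j, cc j < 2 := fun j => by
      have h1 : (α j:ℝ)/N < 1 := (div_lt_one hNpos).mpr (hcaseA j)
      simp only [hcc]; linarith
    have hpt : ∀ ζ ∈ {ζ : Fin n → ℂ | (∀ j, ‖ζ j‖ < 1) ∧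
        ‖∏ j, ζ j ^ α j‖ ^ 2 < ε},
        ENNReal.ofReal (∏ j, (‖ζ j‖)⁻¹) ≤ ENNReal.ofReal (ε ^ q) *
          ∏ j, (Metric.ball (0:ℂ) ((fun _ => (1:ℝ)) j)).indicator
            (fun z => ENNReal.ofReal (‖z‖ ^ (-(cc j)))) (ζ j) := by
      rintro ζ ⟨h1, h2⟩
      have hP : (∏ j, ‖ζ j‖ ^ α j) ^ 2 < ε := by rw [← habs ζ]; exact h2
      have hmain := my_pointwise_A α hNpos hε0 (fun j => ‖ζ j‖) (fun j => norm_nonneg _) hP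
      have hind : ∀ j, (Metric.ball (0:ℂ) (1:ℝ)).indicator
          (fun z => ENNReal.ofReal (‖z‖ ^ (-(cc j)))) (ζ j)
            = ENNReal.ofReal (‖ζ j‖ ^ (-(cc j))) := fun j =>
        Set.indicator_of_mem (by rw [Metric.mem_ball, dist_zero_right]; exact h1 j) _
      simp only [hind]
      rw [← ENNReal.ofReal_prod_of_nonneg (fun j _ => Real.rpow_nonneg (norm_nonneg _) _),
        ← ENNReal.ofReal_mul (Real.rpow_nonneg hε0.le _)]
      exact ENNReal.ofReal_le_ofReal (by simpa only [hcc, hq] using hmain)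
    have hstep := my_main_step _ (hSm ε) _ (ε ^ q) (Real.rpow_nonneg hε0.le _)
      (fun _ => (1:ℝ)) cc (fun _ => one_pos) hcc0 hcc2 hpt
    refine hstep.trans (ENNReal.ofReal_le_ofReal ?_)
    have hKeq : (∏ j, (2*Real.pi*((1:ℝ))^(2-cc j)/(2-cc j))) = K := by
      rw [hK]
      refine Finset.prod_congr rfl fun j _ => ?_
      rw [Real.one_rpow, mul_one]
      congr 1
      simp only [hcc]; ring
    rw [hKeq]
    exact my_final_arith hKpos.le n q hε0 hε2
  · -- Case B : a single nonzero exponent equal to the norm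
    push_neg at hcaseA
    obtain ⟨j₀, hj₀⟩ := hcaseA
    have hj0N : (α j₀:ℝ) = N := le_antisymm (hle j₀) hj₀
    have hm0 : α j₀ ≠ 0 := by
      intro h
      rw [h] at hj0N
      simp only [Nat.cast_zero] at hj0N
      linarith
    have hzero : ∀ j, j ≠ j₀ → α j = 0 := by
      intro j hj
      have hsum : ∑ i ∈ Finset.univ.erase j₀, (α i:ℝ)^2 = 0 := by
        have h1 : (α j₀:ℝ)^2 = ∑ i, (α i:ℝ)^2 := by rw [hj0N]; exact hNsq
        have h := Finset.sum_erase_add Finset.univ (fun i => (α i:ℝ)^2) (Finset.mem_univ j₀)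
        beta_reduce at h
        linarith
      have h2 := (Finset.sum_eq_zero_iff_of_nonneg (fun i _ => by positivity)).mp hsum j
        (Finset.mem_erase.mpr ⟨hj, Finset.mem_univ j⟩)
      simpa using h2
    refine ⟨(2*Real.pi)^n / Real.log 2 ^ (n-1), by positivity, ?_⟩
    rintro ε ⟨hε0, hε2⟩
    set R : ℝ := ε ^ q with hRdef
    have hRpos : 0 < R := Real.rpow_pos_of_pos hε0 _
    set ρ : Fin n → ℝ := fun j => if j = j₀ then R else 1 with hρdef
    have hρpos : ∀ j, 0 < ρ j := fun j => by
      simp only [hρdef]; split_ifs; exacts [hRpos, one_pos]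
    have hpt : ∀ ζ ∈ {ζ : Fin n → ℂ | (∀ j, ‖ζ j‖ < 1) ∧
        ‖∏ j, ζ j ^ α j‖ ^ 2 < ε},
        ENNReal.ofReal (∏ j, (‖ζ j‖)⁻¹) ≤ ENNReal.ofReal (1:ℝ) *
          ∏ j, (Metric.ball (0:ℂ) (ρ j)).indicator
            (fun z => ENNReal.ofReal (‖z‖ ^ (-((fun _ => (1:ℝ)) j)))) (ζ j) := by
      rintro ζ ⟨h1, h2⟩
      have hP : (∏ j, ‖ζ j‖ ^ α j) ^ 2 < ε := by rw [← habs ζ]; exact h2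
      have hprod_eq : ∏ j, ‖ζ j‖ ^ α j = ‖ζ j₀‖ ^ α j₀ :=
        Finset.prod_eq_single j₀ (fun j _ hj => by rw [hzero j hj, pow_zero])
          (fun h => absurd (Finset.mem_univ j₀) h)
      have hP2 : (‖ζ j₀‖ ^ α j₀) ^ 2 < ε := by rw [← hprod_eq]; exact hP
      have hRm : R ^ (2 * α j₀) = ε := by
        rw [hRdef, ← Real.rpow_natCast (ε ^ q) (2 * α j₀), ← Real.rpow_mul hε0.le]
        rw [show q * ((2 * α j₀ : ℕ):ℝ) = 1 by
          rw [hq]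
          push_cast
          rw [hj0N]
          field_simp]
        exact Real.rpow_one ε
      have hlt : ‖ζ j₀‖ < R := by
        by_contra hcon
        push_neg at hcon
        have h4 : ε ≤ ‖ζ j₀‖ ^ (2 * α j₀) := by
          rw [← hRm]
          exact pow_le_pow_left₀ hRpos.le hcon _
        have h5 : ‖ζ j₀‖ ^ (2 * α j₀) = (‖ζ j₀‖ ^ α j₀) ^ 2 := by
          rw [← pow_mul, mul_comm]
        linarith [hP2, h4.trans_eq h5]
      have hmem : ∀ j, ζ j ∈ Metric.ball (0:ℂ) (ρ j) := by
        intro j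
        rw [Metric.mem_ball, dist_zero_right]
        simp only [hρdef]
        split_ifs with h
        · rw [h]; exact hlt
        · exact h1 j
      have hind : ∀ j, (Metric.ball (0:ℂ) (ρ j)).indicator
          (fun z => ENNReal.ofReal (‖z‖ ^ (-(1:ℝ)))) (ζ j)
            = ENNReal.ofReal ((‖ζ j‖)⁻¹) := fun j => by
        rw [Set.indicator_of_mem (hmem j), Real.rpow_neg_one]
      simp only [hind]
      rw [ENNReal.ofReal_one, one_mul,
        ← ENNReal.ofReal_prod_of_nonneg (fun j _ => inv_nonneg.mpr (norm_nonneg _))]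
    have hstep := my_main_step _ (hSm ε) _ (1:ℝ) zero_le_one ρ (fun _ => (1:ℝ))
      hρpos (fun _ => one_pos) (fun _ => one_lt_two) hpt
    refine hstep.trans (ENNReal.ofReal_le_ofReal ?_)
    have hKeq : (1:ℝ) * (∏ j, (2*Real.pi*(ρ j)^((2:ℝ)-1)/((2:ℝ)-1))) = ε ^ q * (2*Real.pi)^n := by
      have e : ∀ j, 2*Real.pi*(ρ j)^((2:ℝ)-1)/((2:ℝ)-1) = 2*Real.pi*ρ j := by
        intro j
        norm_num [Real.rpow_one]
      rw [one_mul]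
      simp only [e]
      rw [Finset.prod_mul_distrib, Finset.prod_const, Finset.card_univ, Fintype.card_fin]
      have : ∏ j, ρ j = R := by
        simp only [hρdef]
        rw [Finset.prod_ite_eq' Finset.univ j₀ (fun _ => R)]
        simp
      rw [this, hRdef]
      ring
    beta_reduce
    rw [hKeq]
    exact my_final_arith (by positivity) n q hε0 hε2

end Main
end

section
/- Let α, β ∈ ℕⁿ be nonzero multiindices and let ω > 0 satisfy 2ω < min(1/|α|, 1/|β|). There is a constant C > 0 such that for all ε₁, ε₂ ∈ (0, 1], ∫_{Δ \ Δ^{α,β}_{ε₁,ε₂}} (|ζ₁|⋯|ζₙ|)^{-1} dλ(ζ) ≤ C · |(ε₁, ε₂)|^ω, where |(ε₁, ε₂)| = (ε₁² + ε₂²)^{1/2}. -/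
set_option maxHeartbeats 2000000

open MeasureTheory Set

lemma ball_lint {c : ℝ} (hc0 : 0 < c) (hc2 : c < 2) :
    ∫⁻ z in Metric.ball (0:ℂ) 1, ENNReal.ofReal (‖z‖ ^ (-c)) < ⊤ := by
  set μ := volume.restrict (Metric.ball (0:ℂ) 1) with hμ
  have h_nn : (0:ℂ → ℝ) ≤ᵐ[μ] fun z => ‖z‖ ^ (-c) :=
    Filter.Eventually.of_forall fun z => Real.rpow_nonneg (norm_nonneg z) _
  have h_meas : Measurable fun z : ℂ => ‖z‖ ^ (-c) :=
    (by measurability : Measurable fun x : ℝ => x ^ (-c)).comp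
      continuous_norm.measurable
  have hball : μ Set.univ ≠ ⊤ := by
    rw [hμ, Measure.restrict_apply_univ]
    exact measure_ball_lt_top.ne
  rw [show (∫⁻ z in Metric.ball (0:ℂ) 1, ENNReal.ofReal (‖z‖ ^ (-c)))
      = ∫⁻ z, ENNReal.ofReal (‖z‖ ^ (-c)) ∂μ from rfl,
    lintegral_eq_lintegral_meas_le μ h_nn h_meas.aemeasurable]
  have key : ∀ t : ℝ, t ∈ Ioi (0:ℝ) →
      μ {z : ℂ | t ≤ ‖z‖ ^ (-c)} ≤ ENNReal.ofReal (Real.pi * (t ^ (-c⁻¹)) ^ 2) := by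
    intro t ht
    have ht : (0:ℝ) < t := ht
    have hsub : {z : ℂ | t ≤ ‖z‖ ^ (-c)} ⊆ Metric.closedBall 0 (t ^ (-c⁻¹)) := by
      intro z hz
      simp only [mem_setOf_eq] at hz
      rcases eq_or_ne z 0 with rfl | hz0
      · rw [norm_zero, Real.zero_rpow (neg_ne_zero.mpr hc0.ne')] at hz
        exact absurd (ht.trans_le hz) (lt_irrefl (0:ℝ))
      · have ha : 0 < ‖z‖ := norm_pos_iff.mpr hz0
        rw [Metric.mem_closedBall, dist_zero_right]
        have h1 : (‖z‖ ^ (-c)) ^ (-c⁻¹) ≤ t ^ (-c⁻¹) :=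
          Real.rpow_le_rpow_of_nonpos ht hz (neg_nonpos.mpr (inv_nonneg.mpr hc0.le))
        rwa [← Real.rpow_mul ha.le, neg_mul_neg, mul_inv_cancel₀ hc0.ne', Real.rpow_one] at h1
    calc μ {z : ℂ | t ≤ ‖z‖ ^ (-c)}
        ≤ volume (Metric.closedBall (0:ℂ) (t ^ (-c⁻¹))) :=
          le_trans (measure_mono hsub) (Measure.restrict_le_self _)
      _ = ENNReal.ofReal (Real.pi * (t ^ (-c⁻¹)) ^ 2) := by
          rw [Complex.volume_closedBall, ENNReal.ofReal_mul Real.pi_nonneg,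
            ENNReal.ofReal_pow (Real.rpow_nonneg ht.le _), mul_comm]
          congr 1
          rw [← NNReal.coe_real_pi, ENNReal.ofReal_coe_nnreal]
  calc ∫⁻ t in Ioi (0:ℝ), μ {a : ℂ | t ≤ ‖a‖ ^ (-c)}
      ≤ ∫⁻ t in Ioc (0:ℝ) 1 ∪ Ioi 1, μ {a : ℂ | t ≤ ‖a‖ ^ (-c)} :=
        lintegral_mono_set Ioi_subset_Ioc_union_Ioi
    _ ≤ (∫⁻ t in Ioc (0:ℝ) 1, μ {a : ℂ | t ≤ ‖a‖ ^ (-c)})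
        + ∫⁻ t in Ioi 1, μ {a : ℂ | t ≤ ‖a‖ ^ (-c)} := lintegral_union_le _ _ _
    _ < ⊤ := by
        refine ENNReal.add_lt_top.2 ⟨?_, ?_⟩
        · calc (∫⁻ t in Ioc (0:ℝ) 1, μ {a : ℂ | t ≤ ‖a‖ ^ (-c)})
              ≤ ∫⁻ _ in Ioc (0:ℝ) 1, μ Set.univ := by
                refine setLIntegral_mono' measurableSet_Ioc fun t _ => ?_
                exact measure_mono (subset_univ _)
            _ < ⊤ := by
                rw [lintegral_const]
                refine ENNReal.mul_lt_top hball.lt_top ?_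
                rw [Measure.restrict_apply_univ, Real.volume_Ioc]
                exact ENNReal.ofReal_lt_top
        · calc (∫⁻ t in Ioi (1:ℝ), μ {a : ℂ | t ≤ ‖a‖ ^ (-c)})
              ≤ ∫⁻ t in Ioi (1:ℝ), ENNReal.ofReal (Real.pi * (t ^ (-c⁻¹)) ^ 2) :=
                setLIntegral_mono' measurableSet_Ioi fun t h3 => key t (mem_Ioi.2 (lt_trans zero_lt_one (mem_Ioi.1 h3)))
            _ < ⊤ := by
                have h1 : IntegrableOn (fun t : ℝ => t ^ (-2 * c⁻¹)) (Ioi (1:ℝ)) := by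
                  refine integrableOn_Ioi_rpow_of_lt ?_ zero_lt_one
                  have h2 : 1 < 2 / c := (one_lt_div hc0).mpr hc2
                  rw [neg_mul, neg_lt_neg_iff]
                  rwa [div_eq_mul_inv] at h2
                have hint : IntegrableOn (fun t : ℝ => Real.pi * (t ^ (-c⁻¹)) ^ 2) (Ioi 1) := by
                  have h3 : IntegrableOn (fun t : ℝ => Real.pi * t ^ (-2 * c⁻¹)) (Ioi (1:ℝ)) :=
                    h1.const_mul Real.pi
                  refine h3.congr_fun (fun t h4 => ?_) measurableSet_Ioi
                  have h5 : (0:ℝ) < t := lt_trans zero_lt_one h4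
                  rw [← Real.rpow_natCast (t ^ (-c⁻¹)) 2, ← Real.rpow_mul h5.le]
                  congr 1
                  ring
                exact hint.setLIntegral_lt_top

lemma pointwise_est {n : ℕ} (γ : Fin n → ℕ) (ω ε : ℝ) (hω : 0 < ω) (hε : 0 < ε)
    (ζ : Fin n → ℂ) (hε2 : ‖∏ j, ζ j ^ γ j‖ ^ 2 < ε) :
    (∏ j, (‖ζ j‖)⁻¹) ≤
      ε ^ ω * ∏ j, ‖ζ j‖ ^ (-(1 + 2 * ω * (γ j : ℝ))) := by
  by_cases hz : ∃ j, ζ j = 0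
  · obtain ⟨j₀, h0⟩ := hz
    have hL : (∏ j, (‖ζ j‖)⁻¹) = 0 :=
      Finset.prod_eq_zero (Finset.mem_univ j₀) (by rw [h0]; simp)
    rw [hL]
    exact mul_nonneg (Real.rpow_nonneg hε.le _)
      (Finset.prod_nonneg fun j _ => Real.rpow_nonneg (norm_nonneg _) _)
  · push_neg at hz
    have ha : ∀ j, 0 < ‖ζ j‖ := fun j => norm_pos_iff.mpr (hz j)
    have hP : 0 < ∏ j, ‖ζ j‖ ^ γ j :=
      Finset.prod_pos fun j _ => pow_pos (ha j) _
    have hPa : ‖∏ j, ζ j ^ γ j‖ = ∏ j, ‖ζ j‖ ^ γ j := by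
      rw [norm_prod]
      exact Finset.prod_congr rfl fun j _ => norm_pow _ _
    rw [hPa] at hε2
    have hεω : 0 < ε ^ ω := Real.rpow_pos_of_pos hε ω
    have e2 : (∏ j, ‖ζ j‖ ^ (-(1 + 2 * ω * (γ j : ℝ))))
        = (∏ j, (‖ζ j‖)⁻¹)
          * (((∏ j, ‖ζ j‖ ^ γ j) ^ 2) ^ ω)⁻¹ := by
      calc (∏ j, ‖ζ j‖ ^ (-(1 + 2 * ω * (γ j : ℝ))))
          = ∏ j, ((‖ζ j‖)⁻¹
              * ((‖ζ j‖ ^ γ j : ℝ) ^ (-(2 * ω)))) := by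
            refine Finset.prod_congr rfl fun j _ => ?_
            rw [← Real.rpow_natCast (‖ζ j‖) (γ j),
              ← Real.rpow_mul (ha j).le, ← Real.rpow_neg_one (‖ζ j‖),
              ← Real.rpow_add (ha j)]
            congr 1
            ring
        _ = (∏ j, (‖ζ j‖)⁻¹)
            * ∏ j, ((‖ζ j‖ ^ γ j : ℝ) ^ (-(2 * ω))) := Finset.prod_mul_distrib
        _ = (∏ j, (‖ζ j‖)⁻¹)
            * (((∏ j, ‖ζ j‖ ^ γ j) ^ 2) ^ ω)⁻¹ := by
            rw [Real.finset_prod_rpow _ _ (fun j _ => pow_nonneg (ha j).le _),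
              ← Real.rpow_natCast (∏ j, ‖ζ j‖ ^ γ j) 2,
              ← Real.rpow_mul hP.le, ← Real.rpow_neg hP.le]
            norm_num
    rw [e2]
    have h5 : 0 < ((∏ j, ‖ζ j‖ ^ γ j) ^ 2) ^ ω :=
      Real.rpow_pos_of_pos (pow_pos hP 2) ω
    have h6 : ((∏ j, ‖ζ j‖ ^ γ j) ^ 2) ^ ω ≤ ε ^ ω :=
      Real.rpow_le_rpow (pow_pos hP 2).le hε2.le hω.le
    have h7 : (ε ^ ω)⁻¹ ≤ (((∏ j, ‖ζ j‖ ^ γ j) ^ 2) ^ ω)⁻¹ :=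
      inv_anti₀ h5 h6
    have hprod : (0:ℝ) ≤ ∏ j, (‖ζ j‖)⁻¹ :=
      Finset.prod_nonneg fun j _ => inv_nonneg.mpr (ha j).le
    calc (∏ j, (‖ζ j‖)⁻¹)
        = ε ^ ω * ((∏ j, (‖ζ j‖)⁻¹) * (ε ^ ω)⁻¹) := by
          rw [mul_comm (ε ^ ω), mul_assoc, inv_mul_cancel₀ hεω.ne', mul_one]
      _ ≤ ε ^ ω * ((∏ j, (‖ζ j‖)⁻¹)
            * (((∏ j, ‖ζ j‖ ^ γ j) ^ 2) ^ ω)⁻¹) :=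
          mul_le_mul_of_nonneg_left (mul_le_mul_of_nonneg_left h7 hprod) hεω.le

lemma key_est {n : ℕ} (γ : Fin n → ℕ) (ω : ℝ) (hω : 0 < ω)
    (hγω : ∀ j, 2 * ω * (γ j : ℝ) < 1) :
    ∃ C > (0:ℝ), ∀ ε : ℝ, 0 < ε →
      ∫⁻ ζ in {ζ : Fin n → ℂ | (∀ j, ‖ζ j‖ < 1) ∧
          ‖∏ j, ζ j ^ γ j‖ ^ 2 < ε},
        ENNReal.ofReal (∏ j, (‖ζ j‖)⁻¹) ≤ ENNReal.ofReal (C * ε ^ ω) := by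
  set f : Fin n → ℂ → ℝ := fun j =>
    (Metric.ball (0:ℂ) 1).indicator (fun z => ‖z‖ ^ (-(1 + 2 * ω * (γ j : ℝ)))) with hf
  have hmeas_rpow : ∀ j, Measurable fun z : ℂ => ‖z‖ ^ (-(1 + 2 * ω * (γ j : ℝ))) :=
    fun j => (by measurability : Measurable fun x : ℝ => x ^ (-(1 + 2 * ω * (γ j : ℝ)))).comp
      continuous_norm.measurable
  have hfm : ∀ j, Measurable (f j) := fun j =>
    (hmeas_rpow j).indicator measurableSet_ball
  have hfnn : ∀ j, ∀ z, 0 ≤ f j z := fun j z =>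
    Set.indicator_nonneg (fun z _ => Real.rpow_nonneg (norm_nonneg z) _) z
  have hfi : ∀ j, Integrable (f j) := by
    intro j
    rw [hf, integrable_indicator_iff measurableSet_ball]
    refine ⟨((hmeas_rpow j).aestronglyMeasurable).restrict, ?_⟩
    rw [hasFiniteIntegral_iff_ofReal (Filter.Eventually.of_forall fun z =>
      Real.rpow_nonneg (norm_nonneg z) _)]
    exact ball_lint (by positivity) (by linarith [hγω j])
  set F : (Fin n → ℂ) → ℝ := fun ζ => ∏ j, f j (ζ j) with hF
  have hFi : Integrable F := Integrable.fintype_prod (𝕜 := ℝ) hfi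
  have hFnn : ∀ ζ, 0 ≤ F ζ := fun ζ => Finset.prod_nonneg fun j _ => hfnn j _
  have hFm : Measurable F := Finset.measurable_prod _ fun j _ =>
    (hfm j).comp (measurable_pi_apply j)
  have hInt_nonneg : 0 ≤ ∫ ζ, F ζ := integral_nonneg hFnn
  refine ⟨(∫ ζ, F ζ) + 1, by linarith, fun ε hε => ?_⟩
  have hεω : (0:ℝ) ≤ ε ^ ω := Real.rpow_nonneg hε.le ω
  calc ∫⁻ ζ in {ζ : Fin n → ℂ | (∀ j, ‖ζ j‖ < 1) ∧
          ‖∏ j, ζ j ^ γ j‖ ^ 2 < ε},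
        ENNReal.ofReal (∏ j, (‖ζ j‖)⁻¹)
      ≤ ∫⁻ ζ in {ζ : Fin n → ℂ | (∀ j, ‖ζ j‖ < 1) ∧
          ‖∏ j, ζ j ^ γ j‖ ^ 2 < ε},
        ENNReal.ofReal (ε ^ ω) * ENNReal.ofReal (F ζ) := by
        refine setLIntegral_mono (measurable_const.mul
          (ENNReal.measurable_ofReal.comp hFm)) fun ζ hζ => ?_
        obtain ⟨h1, h2⟩ := hζ
        have hFζ : F ζ = ∏ j, ‖ζ j‖ ^ (-(1 + 2 * ω * (γ j : ℝ))) := by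
          refine Finset.prod_congr rfl fun j _ => ?_
          rw [hf]
          exact indicator_of_mem (by simpa [Metric.mem_ball, dist_zero_right] using h1 j) _
        rw [← ENNReal.ofReal_mul hεω, hFζ]
        exact ENNReal.ofReal_le_ofReal (pointwise_est γ ω ε hω hε ζ h2)
    _ ≤ ∫⁻ ζ, ENNReal.ofReal (ε ^ ω) * ENNReal.ofReal (F ζ) :=
        setLIntegral_le_lintegral _ _
    _ = ENNReal.ofReal (ε ^ ω) * ∫⁻ ζ, ENNReal.ofReal (F ζ) :=
        lintegral_const_mul _ (ENNReal.measurable_ofReal.comp hFm)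
    _ = ENNReal.ofReal (ε ^ ω) * ENNReal.ofReal (∫ ζ, F ζ) := by
        rw [ofReal_integral_eq_lintegral_ofReal hFi (Filter.Eventually.of_forall hFnn)]
    _ ≤ ENNReal.ofReal (((∫ ζ, F ζ) + 1) * ε ^ ω) := by
        rw [← ENNReal.ofReal_mul hεω]
        exact ENNReal.ofReal_le_ofReal (by nlinarith)

lemma small_coeff {n : ℕ} (γ : Fin n → ℕ) (hγ : γ ≠ 0) (ω : ℝ) (hω : 0 < ω)
    (h : 2 * ω < 1 / Real.sqrt (∑ j, (γ j : ℝ) ^ 2)) :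
    ∀ j, 2 * ω * (γ j : ℝ) < 1 := by
  intro j
  have hex : ∃ j, γ j ≠ 0 := by
    by_contra hc
    push_neg at hc
    exact hγ (funext fun j => hc j)
  obtain ⟨j₀, hj₀⟩ := hex
  have hS : 0 < ∑ j, (γ j : ℝ) ^ 2 := by
    refine Finset.sum_pos' (fun j _ => by positivity) ⟨j₀, Finset.mem_univ j₀, by positivity⟩
  have hsq : 0 < Real.sqrt (∑ j, (γ j : ℝ) ^ 2) := Real.sqrt_pos.mpr hS
  have hle : (γ j : ℝ) ≤ Real.sqrt (∑ j, (γ j : ℝ) ^ 2) := by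
    rw [show ((γ j : ℝ)) = Real.sqrt ((γ j : ℝ) ^ 2) from (Real.sqrt_sq (by positivity)).symm]
    exact Real.sqrt_le_sqrt (Finset.single_le_sum (f := fun j => (γ j : ℝ) ^ 2) (fun j _ => by positivity) (Finset.mem_univ j))
  calc 2 * ω * (γ j : ℝ) ≤ 2 * ω * Real.sqrt (∑ j, (γ j : ℝ) ^ 2) := by
        exact mul_le_mul_of_nonneg_left hle (by linarith)
    _ < (1 / Real.sqrt (∑ j, (γ j : ℝ) ^ 2)) * Real.sqrt (∑ j, (γ j : ℝ) ^ 2) :=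
        mul_lt_mul_of_pos_right h hsq
    _ = 1 := one_div_mul_cancel hsq.ne'

/-- For nonzero multiindices α, β and 0 < ω with
2ω < min(1/|α|, 1/|β|), there is C > 0 such that for all ε₁, ε₂ ∈ (0,1], the integral
of (|ζ₁|⋯|ζₙ|)⁻¹ over Δ \ Δ^{α,β}_{ε₁,ε₂} is at most C·|(ε₁,ε₂)|^ω. -/
theorem stmt_5 {n : ℕ} (α β : Fin n → ℕ) (hα : α ≠ 0) (hβ : β ≠ 0) (ω : ℝ) (hω : 0 < ω)
    (hω2 : 2 * ω < min (1 / Real.sqrt (∑ j, (α j : ℝ) ^ 2))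
      (1 / Real.sqrt (∑ j, (β j : ℝ) ^ 2))) :
    ∃ C > (0:ℝ), ∀ ε₁ ∈ Ioc (0:ℝ) 1, ∀ ε₂ ∈ Ioc (0:ℝ) 1,
      (∫⁻ ζ in {ζ : Fin n → ℂ | (∀ j, ‖ζ j‖ < 1) ∧
          ¬(ε₁ ≤ ‖∏ j, ζ j ^ α j‖ ^ 2 ∧
            ε₂ ≤ ‖∏ j, ζ j ^ β j‖ ^ 2)},
        ENNReal.ofReal (∏ j, (‖ζ j‖)⁻¹)) ≤
      ENNReal.ofReal (C * Real.sqrt (ε₁ ^ 2 + ε₂ ^ 2) ^ ω) := by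
  have hωα : ∀ j, 2 * ω * (α j : ℝ) < 1 :=
    small_coeff α hα ω hω (lt_of_lt_of_le hω2 (min_le_left _ _))
  have hωβ : ∀ j, 2 * ω * (β j : ℝ) < 1 :=
    small_coeff β hβ ω hω (lt_of_lt_of_le hω2 (min_le_right _ _))
  obtain ⟨C₁, hC₁, H₁⟩ := key_est α ω hω hωα
  obtain ⟨C₂, hC₂, H₂⟩ := key_est β ω hω hωβ
  refine ⟨C₁ + C₂, by linarith, fun ε₁ hε₁ ε₂ hε₂ => ?_⟩
  set r := Real.sqrt (ε₁ ^ 2 + ε₂ ^ 2) with hr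
  have hrpos : 0 < r := Real.sqrt_pos.mpr (by nlinarith [hε₁.1, hε₂.1])
  have hr1 : ε₁ ≤ r := (Real.le_sqrt' hε₁.1).mpr (by nlinarith [sq_nonneg ε₂])
  have hr2 : ε₂ ≤ r := (Real.le_sqrt' hε₂.1).mpr (by nlinarith [sq_nonneg ε₁])
  have hsub : {ζ : Fin n → ℂ | (∀ j, ‖ζ j‖ < 1) ∧
      ¬(ε₁ ≤ ‖∏ j, ζ j ^ α j‖ ^ 2 ∧ ε₂ ≤ ‖∏ j, ζ j ^ β j‖ ^ 2)}
      ⊆ {ζ : Fin n → ℂ | (∀ j, ‖ζ j‖ < 1) ∧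
          ‖∏ j, ζ j ^ α j‖ ^ 2 < ε₁}
        ∪ {ζ : Fin n → ℂ | (∀ j, ‖ζ j‖ < 1) ∧
          ‖∏ j, ζ j ^ β j‖ ^ 2 < ε₂} := by
    intro ζ ⟨h1, h2⟩
    by_cases hc : ε₁ ≤ ‖∏ j, ζ j ^ α j‖ ^ 2
    · right
      exact ⟨h1, lt_of_not_ge fun hc2 => h2 ⟨hc, hc2⟩⟩
    · left
      exact ⟨h1, lt_of_not_ge hc⟩
  have hεr1 : C₁ * ε₁ ^ ω ≤ C₁ * r ^ ω :=
    mul_le_mul_of_nonneg_left (Real.rpow_le_rpow hε₁.1.le hr1 hω.le) hC₁.le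
  have hεr2 : C₂ * ε₂ ^ ω ≤ C₂ * r ^ ω :=
    mul_le_mul_of_nonneg_left (Real.rpow_le_rpow hε₂.1.le hr2 hω.le) hC₂.le
  calc (∫⁻ ζ in {ζ : Fin n → ℂ | (∀ j, ‖ζ j‖ < 1) ∧
          ¬(ε₁ ≤ ‖∏ j, ζ j ^ α j‖ ^ 2 ∧
            ε₂ ≤ ‖∏ j, ζ j ^ β j‖ ^ 2)},
        ENNReal.ofReal (∏ j, (‖ζ j‖)⁻¹))
      ≤ ∫⁻ ζ in ({ζ : Fin n → ℂ | (∀ j, ‖ζ j‖ < 1) ∧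
            ‖∏ j, ζ j ^ α j‖ ^ 2 < ε₁}
          ∪ {ζ : Fin n → ℂ | (∀ j, ‖ζ j‖ < 1) ∧
            ‖∏ j, ζ j ^ β j‖ ^ 2 < ε₂}),
          ENNReal.ofReal (∏ j, (‖ζ j‖)⁻¹) := lintegral_mono_set hsub
    _ ≤ (∫⁻ ζ in {ζ : Fin n → ℂ | (∀ j, ‖ζ j‖ < 1) ∧
            ‖∏ j, ζ j ^ α j‖ ^ 2 < ε₁},
          ENNReal.ofReal (∏ j, (‖ζ j‖)⁻¹))
        + ∫⁻ ζ in {ζ : Fin n → ℂ | (∀ j, ‖ζ j‖ < 1) ∧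
            ‖∏ j, ζ j ^ β j‖ ^ 2 < ε₂},
          ENNReal.ofReal (∏ j, (‖ζ j‖)⁻¹) := lintegral_union_le _ _ _
    _ ≤ ENNReal.ofReal (C₁ * ε₁ ^ ω) + ENNReal.ofReal (C₂ * ε₂ ^ ω) :=
        add_le_add (H₁ ε₁ hε₁.1) (H₂ ε₂ hε₂.1)
    _ ≤ ENNReal.ofReal ((C₁ + C₂) * r ^ ω) := by
        rw [← ENNReal.ofReal_add (mul_nonneg hC₁.le (Real.rpow_nonneg hε₁.1.le ω)) (mul_nonneg hC₂.le (Real.rpow_nonneg hε₂.1.le ω))]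
        exact ENNReal.ofReal_le_ofReal (by nlinarith)
end

section
/- Let α, β ∈ ℕⁿ be nonzero multiindices and let ω > 0 satisfy 2ω < min(1/|α|, 1/|β|). There is a constant C > 0 such that for all ε₁, ε₂ ∈ (0, 1], ∫_{Δ^{α,β}_{ε₁,ε₂}} (ε₁/|ζ^α|² + ε₂/|ζ^β|²) · (|ζ₁|⋯|ζₙ|)^{-1} dλ(ζ) ≤ C · |(ε₁, ε₂)|^ω, where |(ε₁, ε₂)| = (ε₁² + ε₂²)^{1/2}. -/
open MeasureTheory Set

lemma integrable_h {s : ℝ} (hs : -1 < s) (hs0 : s < 0) :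
    Integrable ((Ioo (-1:ℝ) 1).indicator fun x => |x| ^ s) := by
  have hg : Integrable ((Ioo (0:ℝ) 1).indicator fun x => x ^ s) := by
    have := (intervalIntegral.intervalIntegrable_rpow' (a := 0) (b := 1) hs)
    rw [intervalIntegrable_iff_integrableOn_Ioo_of_le zero_le_one] at this
    exact this.integrable_indicator measurableSet_Ioo
  have hgn : Integrable (fun x : ℝ => (Ioo (0:ℝ) 1).indicator (fun y => y ^ s) (-x)) :=
    hg.comp_neg
  have hEq : ((Ioo (-1:ℝ) 1).indicator fun x => |x| ^ s) =
      fun x => (Ioo (0:ℝ) 1).indicator (fun y => y ^ s) x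
        + (Ioo (0:ℝ) 1).indicator (fun y => y ^ s) (-x) := by
    funext x
    by_cases hx : x ∈ Ioo (-1:ℝ) 1
    · obtain ⟨ha, hb⟩ := hx
      rw [indicator_of_mem (Set.mem_Ioo.mpr ⟨ha, hb⟩)]
      rcases lt_trichotomy x 0 with h | h | h
      · rw [indicator_of_notMem (by simp [h.not_gt] : x ∉ Ioo (0:ℝ) 1),
          indicator_of_mem (Set.mem_Ioo.mpr ⟨by linarith, by linarith⟩ : -x ∈ Ioo (0:ℝ) 1),
          abs_of_neg h, zero_add]
      · subst h
        simp [Real.zero_rpow hs0.ne]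
      · rw [indicator_of_mem (Set.mem_Ioo.mpr ⟨h, hb⟩ : x ∈ Ioo (0:ℝ) 1),
          indicator_of_notMem (by simp [h.le] : -x ∉ Ioo (0:ℝ) 1),
          abs_of_pos h, add_zero]
    · simp only [mem_Ioo, not_and, not_lt] at hx
      have h1 : x ∉ Ioo (0:ℝ) 1 := by
        simp only [mem_Ioo, not_and, not_lt]
        intro h0; exact hx (by linarith)
      have h2 : -x ∉ Ioo (0:ℝ) 1 := by
        simp only [mem_Ioo, not_and, not_lt]
        intro h0
        by_contra hc
        push_neg at hc
        have := hx (by linarith)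
        linarith
      rw [indicator_of_notMem (by simp only [mem_Ioo, not_and, not_lt]; intro ha; exact hx ha),
        indicator_of_notMem h1, indicator_of_notMem h2, add_zero]
  rw [hEq]
  exact hg.add hgn

lemma integrable_fA {s : ℝ} (h2 : -2 < s) (h0 : s < 0) :
    Integrable ((Metric.ball (0:ℂ) 1).indicator fun z => ‖z‖ ^ s) := by
  set h : ℝ → ℝ := (Ioo (-1:ℝ) 1).indicator fun x => |x| ^ (s/2) with hh
  have hint : Integrable h := integrable_h (by linarith) (by linarith)
  have hH : Integrable (fun z : ℂ => h z.re * h z.im) := by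
    have : Integrable (fun p : ℝ × ℝ => h p.1 * h p.2) ((volume : Measure ℝ).prod volume) :=
      hint.mul_prod hint
    have hcomp := (Complex.volume_preserving_equiv_real_prod.integrable_comp_emb
      Complex.measurableEquivRealProd.measurableEmbedding
      (g := fun p : ℝ × ℝ => h p.1 * h p.2)).mpr (by simpa [Measure.volume_eq_prod] using this)
    simpa [Function.comp_def, Complex.measurableEquivRealProd, Complex.equivRealProdCLM_apply] using hcomp
  have hmeas : AEStronglyMeasurable ((Metric.ball (0:ℂ) 1).indicator fun z => ‖z‖ ^ s)
      volume :=
    ((((by fun_prop : Measurable fun z : ℂ => ‖z‖ ^ s))).indicator measurableSet_ball).aestronglyMeasurable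
  refine hH.mono' hmeas ?_
  have hnull : (volume : Measure ℂ) {z : ℂ | z.re = 0 ∨ z.im = 0} = 0 := by
    have h1 : (volume : Measure ℂ) {z : ℂ | z.re = 0} = 0 := by
      have : {z : ℂ | z.re = 0} = Complex.measurableEquivRealProd ⁻¹' ({0} ×ˢ univ) := by
        ext z; simp [Complex.measurableEquivRealProd, Complex.equivRealProd, eq_comm]
      rw [this, Complex.volume_preserving_equiv_real_prod.measure_preimage
        ((measurableSet_singleton 0).prod MeasurableSet.univ).nullMeasurableSet]
      rw [Measure.volume_eq_prod, Measure.prod_prod]; simp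
    have h2' : (volume : Measure ℂ) {z : ℂ | z.im = 0} = 0 := by
      have : {z : ℂ | z.im = 0} = Complex.measurableEquivRealProd ⁻¹' (univ ×ˢ {0}) := by
        ext z; simp [Complex.measurableEquivRealProd, Complex.equivRealProd, eq_comm]
      rw [this, Complex.volume_preserving_equiv_real_prod.measure_preimage
        (MeasurableSet.univ.prod (measurableSet_singleton 0)).nullMeasurableSet]
      rw [Measure.volume_eq_prod, Measure.prod_prod]; simp
    exact measure_union_null h1 h2'
  rw [ae_iff]
  refine measure_mono_null ?_ hnull
  intro z hz
  simp only [mem_setOf_eq, not_le] at hz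
  by_contra hzn
  simp only [mem_setOf_eq, not_or] at hzn
  obtain ⟨hre, him⟩ := hzn
  apply absurd hz
  push_neg
  have hre' : 0 < |z.re| := abs_pos.mpr hre
  have him' : 0 < |z.im| := abs_pos.mpr him
  by_cases hball : z ∈ Metric.ball (0:ℂ) 1
  · have habs : ‖z‖ < 1 := by
      simpa [Complex.dist_eq] using (Metric.mem_ball.mp hball)
    rw [indicator_of_mem hball]
    have h1 : |z.re| < 1 := lt_of_le_of_lt (Complex.abs_re_le_norm z) habs
    have h2' : |z.im| < 1 := lt_of_le_of_lt (Complex.abs_im_le_norm z) habs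
    have hhre : h z.re = |z.re| ^ (s/2) :=
      indicator_of_mem (Set.mem_Ioo.mpr ⟨(abs_lt.mp h1).1, (abs_lt.mp h1).2⟩) _
    have hhim : h z.im = |z.im| ^ (s/2) :=
      indicator_of_mem (Set.mem_Ioo.mpr ⟨(abs_lt.mp h2').1, (abs_lt.mp h2').2⟩) _
    rw [hhre, hhim, Real.norm_eq_abs,
      abs_of_nonneg (Real.rpow_nonneg (norm_nonneg z) s)]
    have key : |z.re| * |z.im| ≤ ‖z‖ ^ 2 := by
      have hsq := Complex.sq_norm z
      rw [Complex.normSq_apply] at hsq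
      nlinarith [sq_nonneg (|z.re| - |z.im|), abs_mul_abs_self z.re, abs_mul_abs_self z.im]
    calc ‖z‖ ^ s = ((‖z‖ ^ 2 : ℝ)) ^ (s/2) := by
          rw [← Real.rpow_natCast (‖z‖) 2, ← Real.rpow_mul (norm_nonneg z)]
          norm_num
          congr 1
          ring
      _ ≤ (|z.re| * |z.im|) ^ (s/2) :=
          Real.rpow_le_rpow_of_nonpos (by positivity) key (by linarith)
      _ = |z.re| ^ (s/2) * |z.im| ^ (s/2) := Real.mul_rpow (abs_nonneg _) (abs_nonneg _)
  · rw [indicator_of_notMem hball]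
    simp only [norm_zero]
    have : 0 ≤ h z.re := indicator_nonneg (fun y _ => Real.rpow_nonneg (abs_nonneg y) _) _
    have : 0 ≤ h z.im := indicator_nonneg (fun y _ => Real.rpow_nonneg (abs_nonneg y) _) _
    positivity

lemma pointwise_bound {n : ℕ} (α : Fin n → ℕ) (ω ε : ℝ) (hω : 0 < ω) (hω1 : ω ≤ 1)
    (hε : 0 < ε) (ζ : Fin n → ℂ) (hb : ∀ j, ‖ζ j‖ < 1)
    (hX : ε ≤ ‖∏ j, ζ j ^ α j‖ ^ 2) :
    ε / ‖∏ j, ζ j ^ α j‖ ^ 2 * ∏ j, (‖ζ j‖)⁻¹ ≤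
      ε ^ ω * ∏ j, (Metric.ball (0:ℂ) 1).indicator
        (fun z => ‖z‖ ^ (-(2 * ω * (α j : ℝ)) - 1)) (ζ j) := by
  set X := ‖∏ j, ζ j ^ α j‖ ^ 2 with hXdef
  set P := ∏ j, (‖ζ j‖)⁻¹ with hPdef
  have hPnn : 0 ≤ P := Finset.prod_nonneg fun j _ => inv_nonneg.mpr (norm_nonneg _)
  by_cases hz : ∀ j, ζ j ≠ 0
  · have hXpos : 0 < X := lt_of_lt_of_le hε hX
    set a : Fin n → ℝ := fun j => ‖ζ j‖ with hadef
    have ha : ∀ j, 0 < a j := fun j => norm_pos_iff.mpr (hz j)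
    have step1 : ε / X ≤ ε ^ ω * X ^ (-ω) := by
      have h1ω : ε ^ (1 - ω) ≤ X ^ (1 - ω) := Real.rpow_le_rpow hε.le hX (by linarith)
      calc ε / X = ε ^ ω * ε ^ (1 - ω) / X := by
            rw [← Real.rpow_add hε]
            norm_num
        _ ≤ ε ^ ω * X ^ (1 - ω) / X := by gcongr
        _ = ε ^ ω * X ^ (-ω) := by
            rw [show (1 - ω) = 1 + (-ω) by ring, Real.rpow_add hXpos, Real.rpow_one]
            field_simp
    have hXeq : X = ∏ j, a j ^ (2 * α j) := by
      rw [hXdef, norm_prod]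
      simp only [norm_pow]
      rw [← Finset.prod_pow]
      exact Finset.prod_congr rfl fun j _ => by rw [← pow_mul, Nat.mul_comm]
    have step2 : X ^ (-ω) * P = ∏ j, a j ^ (-(2 * ω * (α j : ℝ)) - 1) := by
      rw [hXeq, ← Real.finset_prod_rpow _ _ (fun j _ => pow_nonneg (norm_nonneg _) _),
        hPdef, ← Finset.prod_mul_distrib]
      refine Finset.prod_congr rfl fun j _ => ?_
      rw [← Real.rpow_natCast (a j) (2 * α j), ← Real.rpow_mul (ha j).le,
        ← Real.rpow_neg_one (a j), ← Real.rpow_add (ha j)]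
      congr 1
      push_cast
      ring
    have hInd : ∀ j, (Metric.ball (0:ℂ) 1).indicator
        (fun z => ‖z‖ ^ (-(2 * ω * (α j : ℝ)) - 1)) (ζ j)
        = a j ^ (-(2 * ω * (α j : ℝ)) - 1) := fun j =>
      indicator_of_mem (by simp [Metric.mem_ball, Complex.dist_eq, hb j]) _
    calc ε / X * P ≤ (ε ^ ω * X ^ (-ω)) * P := mul_le_mul_of_nonneg_right step1 hPnn
      _ = ε ^ ω * (X ^ (-ω) * P) := by ring
      _ = ε ^ ω * ∏ j, a j ^ (-(2 * ω * (α j : ℝ)) - 1) := by rw [step2]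
      _ = _ := by
          congr 1
          exact (Finset.prod_congr rfl fun j _ => hInd j).symm
  · push_neg at hz
    obtain ⟨j0, hj0⟩ := hz
    have hP : P = 0 := Finset.prod_eq_zero (Finset.mem_univ j0) (by simp [hj0])
    rw [hP, mul_zero]
    exact mul_nonneg (Real.rpow_nonneg hε.le _) (Finset.prod_nonneg fun j _ =>
      indicator_nonneg (fun y _ => Real.rpow_nonneg (norm_nonneg _) _) _)

section helpers

lemma norm_index_ge {n : ℕ} (α : Fin n → ℕ) (j : Fin n) :
    (α j : ℝ) ≤ Real.sqrt (∑ i, (α i : ℝ) ^ 2) := by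
  rw [show (α j : ℝ) = Real.sqrt ((α j : ℝ) ^ 2) by
    rw [Real.sqrt_sq (Nat.cast_nonneg _)]]
  exact Real.sqrt_le_sqrt (Finset.single_le_sum (f := fun i => (α i : ℝ) ^ 2)
    (fun i _ => sq_nonneg _) (Finset.mem_univ j))

lemma norm_index_one_le {n : ℕ} (α : Fin n → ℕ) (hα : α ≠ 0) :
    1 ≤ Real.sqrt (∑ i, (α i : ℝ) ^ 2) := by
  obtain ⟨j, hj⟩ := Function.ne_iff.mp hα
  have h1 : (1 : ℝ) ≤ (α j : ℝ) := by
    have : 1 ≤ α j := Nat.one_le_iff_ne_zero.mpr hj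
    exact_mod_cast this
  linarith [norm_index_ge α j]

end helpers

/-- For nonzero multiindices α, β and 0 < ω with 2ω < min(1/|α|, 1/|β|),
there is C > 0 such that for all ε₁, ε₂ ∈ (0,1], the integral of
(ε₁/|ζ^α|² + ε₂/|ζ^β|²)·(|ζ₁|⋯|ζₙ|)⁻¹ over Δ^{α,β}_{ε₁,ε₂} is at most C·|(ε₁,ε₂)|^ω. -/
theorem stmt_7 {n : ℕ} (α β : Fin n → ℕ) (hα : α ≠ 0) (hβ : β ≠ 0) (ω : ℝ) (hω : 0 < ω)
    (hω2 : 2 * ω < min (1 / Real.sqrt (∑ j, (α j : ℝ) ^ 2))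
      (1 / Real.sqrt (∑ j, (β j : ℝ) ^ 2))) :
    ∃ C > (0:ℝ), ∀ ε₁ ∈ Ioc (0:ℝ) 1, ∀ ε₂ ∈ Ioc (0:ℝ) 1,
      (∫⁻ ζ in {ζ : Fin n → ℂ | (∀ j, ‖ζ j‖ < 1) ∧
          ε₁ ≤ ‖∏ j, ζ j ^ α j‖ ^ 2 ∧
          ε₂ ≤ ‖∏ j, ζ j ^ β j‖ ^ 2},
        ENNReal.ofReal ((ε₁ / ‖∏ j, ζ j ^ α j‖ ^ 2 +
            ε₂ / ‖∏ j, ζ j ^ β j‖ ^ 2) *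
          ∏ j, (‖ζ j‖)⁻¹)) ≤
      ENNReal.ofReal (C * Real.sqrt (ε₁ ^ 2 + ε₂ ^ 2) ^ ω) := by
  -- basic facts about the norms of the multiindices
  have hα1 := norm_index_one_le α hα
  have hβ1 := norm_index_one_le β hβ
  have hαpos : 0 < Real.sqrt (∑ i, (α i : ℝ) ^ 2) := by linarith
  have hβpos : 0 < Real.sqrt (∑ i, (β i : ℝ) ^ 2) := by linarith
  have hω2a : 2 * ω < 1 / Real.sqrt (∑ i, (α i : ℝ) ^ 2) := lt_of_lt_of_le hω2 (min_le_left _ _)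
  have hω2b : 2 * ω < 1 / Real.sqrt (∑ i, (β i : ℝ) ^ 2) := lt_of_lt_of_le hω2 (min_le_right _ _)
  have hω1 : ω ≤ 1 := by
    have : 1 / Real.sqrt (∑ i, (α i : ℝ) ^ 2) ≤ 1 := by
      rw [div_le_one hαpos]; exact hα1
    linarith
  have hωα : ∀ j, 2 * ω * (α j : ℝ) < 1 := fun j => by
    calc 2 * ω * (α j : ℝ) ≤ 2 * ω * Real.sqrt (∑ i, (α i : ℝ) ^ 2) := by
          have := norm_index_ge α j
          nlinarith
      _ < 1 := (lt_div_iff₀ hαpos).mp hω2a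
  have hωβ : ∀ j, 2 * ω * (β j : ℝ) < 1 := fun j => by
    calc 2 * ω * (β j : ℝ) ≤ 2 * ω * Real.sqrt (∑ i, (β i : ℝ) ^ 2) := by
          have := norm_index_ge β j
          nlinarith
      _ < 1 := (lt_div_iff₀ hβpos).mp hω2b
  -- the dominating integrable functions
  set fA : Fin n → ℂ → ℝ := fun j => (Metric.ball (0:ℂ) 1).indicator
    fun z => ‖z‖ ^ (-(2 * ω * (α j : ℝ)) - 1) with hfA
  set fB : Fin n → ℂ → ℝ := fun j => (Metric.ball (0:ℂ) 1).indicator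
    fun z => ‖z‖ ^ (-(2 * ω * (β j : ℝ)) - 1) with hfB
  have hfAnn : ∀ j z, 0 ≤ fA j z := fun j z =>
    indicator_nonneg (fun y _ => Real.rpow_nonneg (norm_nonneg _) _) _
  have hfBnn : ∀ j z, 0 ≤ fB j z := fun j z =>
    indicator_nonneg (fun y _ => Real.rpow_nonneg (norm_nonneg _) _) _
  have hfAint : ∀ j, Integrable (fA j) := fun j =>
    integrable_fA (by linarith [hωα j]) (by nlinarith [mul_pos (mul_pos two_pos hω) (show (0:ℝ) < (α j : ℝ) + 1 by positivity)])
  have hfBint : ∀ j, Integrable (fB j) := fun j =>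
    integrable_fA (by linarith [hωβ j]) (by nlinarith [mul_pos (mul_pos two_pos hω) (show (0:ℝ) < (β j : ℝ) + 1 by positivity)])
  have hFA : Integrable (fun ζ : Fin n → ℂ => ∏ j, fA j (ζ j)) :=
    Integrable.fin_nat_prod hfAint
  have hFB : Integrable (fun ζ : Fin n → ℂ => ∏ j, fB j (ζ j)) :=
    Integrable.fin_nat_prod hfBint
  set I1 : ℝ := ∫ ζ : Fin n → ℂ, ∏ j, fA j (ζ j) with hI1
  set I2 : ℝ := ∫ ζ : Fin n → ℂ, ∏ j, fB j (ζ j) with hI2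
  have hI1nn : 0 ≤ I1 := integral_nonneg fun ζ => Finset.prod_nonneg fun j _ => hfAnn j _
  have hI2nn : 0 ≤ I2 := integral_nonneg fun ζ => Finset.prod_nonneg fun j _ => hfBnn j _
  refine ⟨I1 + I2 + 1, by linarith, ?_⟩
  rintro ε₁ ⟨hε₁, hε₁1⟩ ε₂ ⟨hε₂, hε₂1⟩
  set t : ℝ := Real.sqrt (ε₁ ^ 2 + ε₂ ^ 2) with ht
  have htnn : 0 ≤ t := Real.sqrt_nonneg _
  have hε₁t : ε₁ ≤ t := by
    nlinarith [Real.sq_sqrt (show (0:ℝ) ≤ ε₁ ^ 2 + ε₂ ^ 2 by positivity)]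
  have hε₂t : ε₂ ≤ t := by
    nlinarith [Real.sq_sqrt (show (0:ℝ) ≤ ε₁ ^ 2 + ε₂ ^ 2 by positivity)]
  set g : (Fin n → ℂ) → ℝ := fun ζ => ε₁ ^ ω * ∏ j, fA j (ζ j) + ε₂ ^ ω * ∏ j, fB j (ζ j)
    with hg
  have hgnn : ∀ ζ, 0 ≤ g ζ := fun ζ => by
    have := Finset.prod_nonneg (fun j (_ : j ∈ Finset.univ) => hfAnn j (ζ j))
    have := Finset.prod_nonneg (fun j (_ : j ∈ Finset.univ) => hfBnn j (ζ j))
    have h1 : (0:ℝ) ≤ ε₁ ^ ω := Real.rpow_nonneg hε₁.le _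
    have h2 : (0:ℝ) ≤ ε₂ ^ ω := Real.rpow_nonneg hε₂.le _
    positivity
  have hfAmeas : ∀ j, Measurable (fA j) := fun j =>
    Measurable.indicator (by fun_prop) measurableSet_ball
  have hfBmeas : ∀ j, Measurable (fB j) := fun j =>
    Measurable.indicator (by fun_prop) measurableSet_ball
  have hgmeas : Measurable fun ζ => ENNReal.ofReal (g ζ) := by
    apply Measurable.ennreal_ofReal
    apply Measurable.add
    · exact (Finset.measurable_prod Finset.univ fun j _ =>
        (hfAmeas j).comp (measurable_pi_apply j)).const_mul _
    · exact (Finset.measurable_prod Finset.univ fun j _ =>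
        (hfBmeas j).comp (measurable_pi_apply j)).const_mul _
  have hgint : Integrable g := (hFA.const_mul _).add (hFB.const_mul _)
  calc (∫⁻ ζ in {ζ : Fin n → ℂ | (∀ j, ‖ζ j‖ < 1) ∧
          ε₁ ≤ ‖∏ j, ζ j ^ α j‖ ^ 2 ∧
          ε₂ ≤ ‖∏ j, ζ j ^ β j‖ ^ 2},
        ENNReal.ofReal ((ε₁ / ‖∏ j, ζ j ^ α j‖ ^ 2 +
            ε₂ / ‖∏ j, ζ j ^ β j‖ ^ 2) *
          ∏ j, (‖ζ j‖)⁻¹))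
      ≤ ∫⁻ ζ in {ζ : Fin n → ℂ | (∀ j, ‖ζ j‖ < 1) ∧
          ε₁ ≤ ‖∏ j, ζ j ^ α j‖ ^ 2 ∧
          ε₂ ≤ ‖∏ j, ζ j ^ β j‖ ^ 2}, ENNReal.ofReal (g ζ) := by
        refine setLIntegral_mono hgmeas ?_
        rintro ζ ⟨hb, hA, hB⟩
        apply ENNReal.ofReal_le_ofReal
        rw [add_mul]
        exact add_le_add (pointwise_bound α ω ε₁ hω hω1 hε₁ ζ hb hA)
          (pointwise_bound β ω ε₂ hω hω1 hε₂ ζ hb hB)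
    _ ≤ ∫⁻ ζ, ENNReal.ofReal (g ζ) := setLIntegral_le_lintegral _ _
    _ = ENNReal.ofReal (∫ ζ, g ζ) :=
        (ofReal_integral_eq_lintegral_ofReal hgint (ae_of_all _ hgnn)).symm
    _ ≤ ENNReal.ofReal ((I1 + I2 + 1) * t ^ ω) := by
        apply ENNReal.ofReal_le_ofReal
        have hgval : ∫ ζ, g ζ = ε₁ ^ ω * I1 + ε₂ ^ ω * I2 := by
          rw [hg, integral_add (hFA.const_mul _) (hFB.const_mul _),
            integral_const_mul, integral_const_mul]
        rw [hgval]
        have h1 : ε₁ ^ ω ≤ t ^ ω := Real.rpow_le_rpow hε₁.le hε₁t hω.le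
        have h2 : ε₂ ^ ω ≤ t ^ ω := Real.rpow_le_rpow hε₂.le hε₂t hω.le
        have htω : 0 ≤ t ^ ω := Real.rpow_nonneg htnn _
        nlinarith [mul_le_mul_of_nonneg_right h1 hI1nn, mul_le_mul_of_nonneg_right h2 hI2nn]
end

section
/- Let α, β ∈ ℕⁿ be nonzero multiindices and let ω > 0 satisfy 2ω < min(1/|α|, 1/|β|). There is a constant C > 0 such that for all ε₁, ε₂ ∈ (0, 1], ∫_{Δ^{α,β}_{ε₁,ε₂}} (ε₁·ε₂/(|ζ^α|²·|ζ^β|²)) · (|ζ₁|⋯|ζₙ|)^{-1} dλ(ζ) ≤ C · |(ε₁, ε₂)|^ω, where |(ε₁, ε₂)| = (ε₁² + ε₂²)^{1/2}. -/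
open MeasureTheory Set

theorem my_lintegral_fin_nat_prod {n : ℕ} {E : Fin n → Type*}
    [∀ i, MeasureSpace (E i)] [∀ i, SigmaFinite (volume : Measure (E i))]
    {f : (i : Fin n) → E i → ENNReal} (hf : ∀ i, Measurable (f i)) :
    ∫⁻ x : (i : Fin n) → E i, ∏ i, f i (x i) = ∏ i, ∫⁻ x, f i x := by
  induction n with
  | zero => simp [volume_pi, lintegral_one]
  | succ n n_ih =>
      have := ((measurePreserving_piFinSuccAbove (fun i => (volume : Measure (E i))) 0).symm)
      rw [volume_pi, ← this.lintegral_comp_emb (MeasurableEquiv.measurableEmbedding _)]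
      simp_rw [MeasurableEquiv.piFinSuccAbove_symm_apply, Fin.insertNthEquiv,
        Fin.prod_univ_succ, Fin.insertNth_zero]
      simp only [Fin.zero_succAbove, cast_eq, Function.comp_def, Fin.cons_zero, Fin.cons_succ,
        Equiv.coe_fn_mk]
      have h := lintegral_prod_mul (μ := (volume : Measure (E 0)))
        (ν := Measure.pi fun j : Fin n => (volume : Measure (E j.succ))) (f := fun x => f 0 x)
        (g := fun y : (j : Fin n) → E j.succ => ∏ j : Fin n, f j.succ (y j))
        ((hf 0).aemeasurable)
        ((Finset.measurable_prod Finset.univ fun (j : Fin n) _ =>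
          (hf j.succ).comp (measurable_pi_apply j)).aemeasurable)
      rw [← volume_pi, n_ih (fun i => hf i.succ)] at h
      exact h

set_option maxHeartbeats 1000000 in
theorem my_onedim {c : ℝ} (hc0 : 0 < c) (hc2 : c < 2) :
    ∫⁻ z : ℂ in Metric.ball 0 1, ENNReal.ofReal (‖z‖ ^ (-c)) < ⊤ := by
  have habs : Measurable fun z : ℂ => ‖z‖ := continuous_norm.measurable
  have hmeas : Measurable fun z : ℂ => ‖z‖ ^ (-c) := by fun_prop
  rw [lintegral_eq_lintegral_meas_le (volume.restrict (Metric.ball (0:ℂ) 1))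
    (Filter.Eventually.of_forall fun z => Real.rpow_nonneg (norm_nonneg z) _)
    hmeas.aemeasurable]
  set μ := volume.restrict (Metric.ball (0:ℂ) 1) with hμ
  rw [← Ioc_union_Ioi_eq_Ioi (zero_le_one (α := ℝ)),
    lintegral_union measurableSet_Ioi (Ioc_disjoint_Ioi le_rfl)]
  have h1 : ∫⁻ t in Ioc (0:ℝ) 1, μ {a : ℂ | t ≤ ‖a‖ ^ (-c)} < ⊤ := by
    calc ∫⁻ t in Ioc (0:ℝ) 1, μ {a : ℂ | t ≤ ‖a‖ ^ (-c)}
        ≤ ∫⁻ _t in Ioc (0:ℝ) 1, volume (Metric.ball (0:ℂ) 1) := by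
          refine setLIntegral_mono measurable_const fun t _ => ?_
          calc μ {a : ℂ | t ≤ ‖a‖ ^ (-c)} ≤ μ univ := measure_mono (subset_univ _)
          _ = volume (Metric.ball (0:ℂ) 1) := by rw [hμ, Measure.restrict_apply_univ]
      _ = volume (Metric.ball (0:ℂ) 1) * volume (Ioc (0:ℝ) 1) := setLIntegral_const _ _
      _ < ⊤ := ENNReal.mul_lt_top measure_ball_lt_top (by simp [Real.volume_Ioc])
  have h2 : ∫⁻ t in Ioi (1:ℝ), μ {a : ℂ | t ≤ ‖a‖ ^ (-c)} < ⊤ := by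
    have key : ∀ t ∈ Ioi (1:ℝ), μ {a : ℂ | t ≤ ‖a‖ ^ (-c)}
        ≤ ENNReal.ofReal (Real.pi * t ^ (-(2/c))) := by
      intro t ht
      rw [mem_Ioi] at ht
      have ht0 : 0 < t := lt_trans one_pos ht
      have hsub : {a : ℂ | t ≤ ‖a‖ ^ (-c)} ⊆
          Metric.closedBall (0:ℂ) (t ^ (-(1/c))) := by
        intro a ha
        simp only [mem_setOf_eq] at ha
        rcases eq_or_ne a 0 with rfl | h0
        · simp [Real.zero_rpow (neg_ne_zero.mpr hc0.ne')] at ha; linarith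
        · have hra : 0 < ‖a‖ := norm_pos_iff.mpr h0
          rw [Metric.mem_closedBall, dist_zero_right]
          have h := Real.rpow_le_rpow_of_nonpos ht0 ha
            (neg_nonpos.mpr (by positivity : (0:ℝ) ≤ 1/c))
          rw [← Real.rpow_mul hra.le, show (-c) * -(1/c) = 1 by field_simp,
            Real.rpow_one] at h
          exact h
      calc μ {a : ℂ | t ≤ ‖a‖ ^ (-c)}
          ≤ volume {a : ℂ | t ≤ ‖a‖ ^ (-c)} :=
            Measure.le_iff'.mp Measure.restrict_le_self _
        _ ≤ volume (Metric.closedBall (0:ℂ) (t ^ (-(1/c)))) := measure_mono hsub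
        _ = ENNReal.ofReal (t ^ (-(1/c))) ^ 2 * NNReal.pi := Complex.volume_closedBall _ _
        _ = ENNReal.ofReal (Real.pi * t ^ (-(2/c))) := by
            rw [← ENNReal.ofReal_pow (Real.rpow_nonneg ht0.le _),
              ← Real.rpow_natCast (t ^ (-(1/c))) 2, ← Real.rpow_mul ht0.le,
              show -(1/c) * ((2:ℕ):ℝ) = -(2/c) by push_cast; ring,
              ENNReal.ofReal_mul Real.pi_pos.le, mul_comm]
            congr 1
            rw [← NNReal.coe_real_pi, ENNReal.ofReal_coe_nnreal]
    have hInt : IntegrableOn (fun t : ℝ => Real.pi * t ^ (-(2/c))) (Ioi (1:ℝ)) := by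
      have h21 : (1:ℝ) < 2/c := (one_lt_div hc0).mpr hc2
      exact (integrableOn_Ioi_rpow_of_lt (by linarith) one_pos).const_mul _
    calc ∫⁻ t in Ioi (1:ℝ), μ {a : ℂ | t ≤ ‖a‖ ^ (-c)}
        ≤ ∫⁻ t in Ioi (1:ℝ), ENNReal.ofReal (Real.pi * t ^ (-(2/c))) :=
          setLIntegral_mono (by fun_prop) key
      _ < ⊤ := hInt.setLIntegral_lt_top
  exact ENNReal.add_lt_top.mpr ⟨h1, h2⟩

theorem my_pointwise {n : ℕ} (α : Fin n → ℕ) (ω : ℝ) (hω : 0 < ω) (hω1 : ω ≤ 1)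
    {ε₁ ε₂ A B : ℝ} (hε₁ : 0 < ε₁) (hε₂ : 0 < ε₂) (hA : ε₁ ≤ A^2) (hB : ε₂ ≤ B^2)
    (hApos : 0 < A) (hBpos : 0 < B)
    (r : Fin n → ℝ) (hr : ∀ j, 0 < r j) (hAeq : A = ∏ j, r j ^ α j) :
    ε₁ * ε₂ / (A^2 * B^2) * ∏ j, (r j)⁻¹
      ≤ ε₁ ^ ω * ∏ j, r j ^ (-(2 * ω * (α j : ℝ) + 1)) := by
  have hprodinv : (0:ℝ) ≤ ∏ j, (r j)⁻¹ :=
    Finset.prod_nonneg fun j _ => inv_nonneg.mpr (hr j).le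
  have key1 : ε₁ * ε₂ / (A^2 * B^2) * ∏ j, (r j)⁻¹
      ≤ (ε₁ / A^2) ^ ω * ∏ j, (r j)⁻¹ := by
    have hx0 : 0 < ε₁ / A^2 := div_pos hε₁ (by positivity)
    have hx1 : ε₁ / A^2 ≤ 1 := (div_le_one (by positivity)).mpr hA
    have p1 : ε₁ / A^2 ≤ (ε₁ / A^2) ^ ω := by
      calc ε₁ / A^2 = (ε₁ / A^2) ^ (1:ℝ) := (Real.rpow_one _).symm
      _ ≤ (ε₁ / A^2) ^ ω := Real.rpow_le_rpow_of_exponent_ge hx0 hx1 hω1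
    have p2 : ε₂ / B^2 ≤ 1 := (div_le_one (by positivity)).mpr hB
    calc ε₁ * ε₂ / (A^2 * B^2) * ∏ j, (r j)⁻¹
        = (ε₁ / A^2) * (ε₂ / B^2) * ∏ j, (r j)⁻¹ := by ring
      _ ≤ ((ε₁ / A^2) ^ ω) * 1 * ∏ j, (r j)⁻¹ := by gcongr
      _ = (ε₁ / A^2) ^ ω * ∏ j, (r j)⁻¹ := by ring
  have hA2 : A ^ 2 = ∏ j, r j ^ (2 * α j) := by
    rw [hAeq, ← Finset.prod_pow]
    exact Finset.prod_congr rfl fun j _ => by rw [← pow_mul, mul_comm]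
  have hsplit : (ε₁ / A^2) ^ ω = ε₁ ^ ω * (A^2) ^ (-ω) := by
    rw [div_eq_mul_inv, Real.mul_rpow hε₁.le (inv_nonneg.mpr (by positivity)),
      ← Real.rpow_neg_one (A^2), ← Real.rpow_mul (by positivity : (0:ℝ) ≤ A^2),
      neg_one_mul]
  have h3 : ((A^2 : ℝ)) ^ (-ω) = ∏ j, r j ^ (-(2 * ω * (α j : ℝ))) := by
    rw [hA2, ← Real.finset_prod_rpow _ _ (fun j _ => pow_nonneg (hr j).le _) (-ω)]
    refine Finset.prod_congr rfl fun j _ => ?_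
    rw [← Real.rpow_natCast (r j) (2 * α j), ← Real.rpow_mul (hr j).le]
    congr 1; push_cast; ring
  have key2 : (ε₁ / A^2) ^ ω * ∏ j, (r j)⁻¹
      = ε₁ ^ ω * ∏ j, r j ^ (-(2 * ω * (α j : ℝ) + 1)) := by
    calc (ε₁ / A^2) ^ ω * ∏ j, (r j)⁻¹
        = ε₁ ^ ω * (∏ j, r j ^ (-(2 * ω * (α j : ℝ)))) * ∏ j, (r j)⁻¹ := by
          rw [hsplit, h3]
      _ = ε₁ ^ ω * ∏ j, (r j ^ (-(2 * ω * (α j : ℝ))) * (r j)⁻¹) := by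
          rw [mul_assoc, ← Finset.prod_mul_distrib]
      _ = ε₁ ^ ω * ∏ j, r j ^ (-(2 * ω * (α j : ℝ) + 1)) := by
          congr 1
          refine Finset.prod_congr rfl fun j _ => ?_
          rw [← Real.rpow_neg_one (r j), ← Real.rpow_add (hr j)]
          congr 1; ring
  exact key1.trans (le_of_eq key2)

theorem my_aux {n : ℕ} (α β : Fin n → ℕ) (ω : ℝ) (hω : 0 < ω) (hω1 : ω ≤ 1)
    {ε₁ ε₂ : ℝ} (h1 : ε₁ ∈ Ioc (0:ℝ) 1) (h2 : ε₂ ∈ Ioc (0:ℝ) 1) :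
    (∫⁻ ζ in {ζ : Fin n → ℂ | (∀ j, ‖ζ j‖ < 1) ∧
        ε₁ ≤ ‖∏ j, ζ j ^ α j‖ ^ 2 ∧
        ε₂ ≤ ‖∏ j, ζ j ^ β j‖ ^ 2},
      ENNReal.ofReal ((ε₁ * ε₂ /
          (‖∏ j, ζ j ^ α j‖ ^ 2 * ‖∏ j, ζ j ^ β j‖ ^ 2)) *
        ∏ j, (‖ζ j‖)⁻¹)) ≤
    ENNReal.ofReal (ε₁ ^ ω) *
      ∏ j, ∫⁻ z : ℂ, (Metric.ball (0:ℂ) 1).indicator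
        (fun w => ENNReal.ofReal (‖w‖ ^ (-(2 * ω * (α j : ℝ) + 1)))) z := by
  have habs : Measurable fun z : ℂ => ‖z‖ := continuous_norm.measurable
  set g : Fin n → ℂ → ENNReal := fun j z => (Metric.ball (0:ℂ) 1).indicator
    (fun w => ENNReal.ofReal (‖w‖ ^ (-(2 * ω * (α j : ℝ) + 1)))) z with hg
  have hgm : ∀ j, Measurable (g j) := by
    intro j
    exact Measurable.indicator (by fun_prop) measurableSet_ball
  set S : Set (Fin n → ℂ) := {ζ : Fin n → ℂ | (∀ j, ‖ζ j‖ < 1) ∧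
        ε₁ ≤ ‖∏ j, ζ j ^ α j‖ ^ 2 ∧
        ε₂ ≤ ‖∏ j, ζ j ^ β j‖ ^ 2} with hS
  have m1 : Measurable fun ζ : Fin n → ℂ => ‖∏ j, ζ j ^ α j‖ ^ 2 :=
    (habs.comp (Finset.measurable_prod Finset.univ fun j _ =>
      (measurable_pi_apply j).pow_const (α j))).pow_const 2
  have m2 : Measurable fun ζ : Fin n → ℂ => ‖∏ j, ζ j ^ β j‖ ^ 2 :=
    (habs.comp (Finset.measurable_prod Finset.univ fun j _ =>
      (measurable_pi_apply j).pow_const (β j))).pow_const 2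
  have e1 : MeasurableSet {ζ : Fin n → ℂ | ∀ j, ‖ζ j‖ < 1} := by
    rw [show {ζ : Fin n → ℂ | ∀ j, ‖ζ j‖ < 1}
      = ⋂ j, {ζ : Fin n → ℂ | ‖ζ j‖ < 1} from by ext; simp]
    exact MeasurableSet.iInter fun j =>
      measurableSet_lt (habs.comp (measurable_pi_apply j)) measurable_const
  have e2 : MeasurableSet {ζ : Fin n → ℂ | ε₁ ≤ ‖∏ j, ζ j ^ α j‖ ^ 2} :=
    measurableSet_le measurable_const m1
  have e3 : MeasurableSet {ζ : Fin n → ℂ | ε₂ ≤ ‖∏ j, ζ j ^ β j‖ ^ 2} :=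
    measurableSet_le measurable_const m2
  have hSm : MeasurableSet S := e1.inter (e2.inter e3)
  have hstep1 : (∫⁻ ζ in S,
      ENNReal.ofReal ((ε₁ * ε₂ /
          (‖∏ j, ζ j ^ α j‖ ^ 2 * ‖∏ j, ζ j ^ β j‖ ^ 2)) *
        ∏ j, (‖ζ j‖)⁻¹)) ≤
      ∫⁻ ζ in S, ENNReal.ofReal (ε₁ ^ ω) * ∏ j, g j (ζ j) := by
    refine setLIntegral_mono' hSm fun ζ hζ => ?_
    obtain ⟨hball, hA, hB⟩ := hζ
    have hmem : ∀ j, ζ j ∈ Metric.ball (0:ℂ) 1 := fun j => by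
      rw [Metric.mem_ball, dist_zero_right]; exact hball j
    have hgeval : ∀ j, g j (ζ j)
        = ENNReal.ofReal (‖ζ j‖ ^ (-(2 * ω * (α j : ℝ) + 1))) := fun j =>
      indicator_of_mem (hmem j) _
    calc ENNReal.ofReal ((ε₁ * ε₂ /
            (‖∏ j, ζ j ^ α j‖ ^ 2 * ‖∏ j, ζ j ^ β j‖ ^ 2)) *
          ∏ j, (‖ζ j‖)⁻¹)
        ≤ ENNReal.ofReal (ε₁ ^ ω *
            ∏ j, ‖ζ j‖ ^ (-(2 * ω * (α j : ℝ) + 1))) := by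
          apply ENNReal.ofReal_le_ofReal
          by_cases hz : ∀ j, ζ j ≠ 0
          · have hAabs : ‖∏ j, ζ j ^ α j‖ = ∏ j, ‖ζ j‖ ^ α j := by
              rw [norm_prod]
              exact Finset.prod_congr rfl fun j _ => norm_pow _ _
            have hrpos : ∀ j, 0 < ‖ζ j‖ := fun j => norm_pos_iff.mpr (hz j)
            have hApos : 0 < ‖∏ j, ζ j ^ α j‖ := by
              rw [hAabs]; exact Finset.prod_pos fun j _ => pow_pos (hrpos j) _
            have hBpos : 0 < ‖∏ j, ζ j ^ β j‖ := by
              rw [norm_prod]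
              refine Finset.prod_pos fun j _ => ?_
              rw [norm_pow]
              exact pow_pos (hrpos j) _
            exact my_pointwise α ω hω hω1 h1.1 h2.1 hA hB hApos hBpos _ hrpos hAabs
          · push_neg at hz
            obtain ⟨j0, hj0⟩ := hz
            have hz0 : ∏ j, (‖ζ j‖)⁻¹ = 0 :=
              Finset.prod_eq_zero (Finset.mem_univ j0) (by simp [hj0])
            rw [hz0, mul_zero]
            exact mul_nonneg (Real.rpow_nonneg h1.1.le _)
              (Finset.prod_nonneg fun j _ => Real.rpow_nonneg (norm_nonneg _) _)
      _ = ENNReal.ofReal (ε₁ ^ ω) * ∏ j, g j (ζ j) := by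
          rw [ENNReal.ofReal_mul (Real.rpow_nonneg h1.1.le _),
            ENNReal.ofReal_prod_of_nonneg
              (fun j _ => Real.rpow_nonneg (norm_nonneg _) _)]
          congr 1
          exact Finset.prod_congr rfl fun j _ => (hgeval j).symm
  refine hstep1.trans ?_
  refine (setLIntegral_le_lintegral _ _).trans ?_
  rw [lintegral_const_mul' _ _ ENNReal.ofReal_ne_top,
    my_lintegral_fin_nat_prod hgm]

set_option maxHeartbeats 4000000 in
/-- For nonzero multiindices α, β and 0 < ω with 2ω < min(1/|α|, 1/|β|),
there is C > 0 such that for all ε₁, ε₂ ∈ (0,1], the integral of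
(ε₁·ε₂/(|ζ^α|²·|ζ^β|²))·(|ζ₁|⋯|ζₙ|)⁻¹ over Δ^{α,β}_{ε₁,ε₂} is at most C·|(ε₁,ε₂)|^ω. -/
theorem stmt_8 {n : ℕ} (α β : Fin n → ℕ) (hα : α ≠ 0) (hβ : β ≠ 0) (ω : ℝ) (hω : 0 < ω)
    (hω2 : 2 * ω < min (1 / Real.sqrt (∑ j, (α j : ℝ) ^ 2))
      (1 / Real.sqrt (∑ j, (β j : ℝ) ^ 2))) :
    ∃ C > (0:ℝ), ∀ ε₁ ∈ Ioc (0:ℝ) 1, ∀ ε₂ ∈ Ioc (0:ℝ) 1,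
      (∫⁻ ζ in {ζ : Fin n → ℂ | (∀ j, ‖ζ j‖ < 1) ∧
          ε₁ ≤ ‖∏ j, ζ j ^ α j‖ ^ 2 ∧
          ε₂ ≤ ‖∏ j, ζ j ^ β j‖ ^ 2},
        ENNReal.ofReal ((ε₁ * ε₂ /
            (‖∏ j, ζ j ^ α j‖ ^ 2 * ‖∏ j, ζ j ^ β j‖ ^ 2)) *
          ∏ j, (‖ζ j‖)⁻¹)) ≤
      ENNReal.ofReal (C * Real.sqrt (ε₁ ^ 2 + ε₂ ^ 2) ^ ω) := by
  -- basic facts about the sizes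
  have sqrt_facts : ∀ γ : Fin n → ℕ, γ ≠ 0 →
      1 ≤ Real.sqrt (∑ j, (γ j : ℝ) ^ 2) ∧
      ∀ j, (γ j : ℝ) ≤ Real.sqrt (∑ j, (γ j : ℝ) ^ 2) := by
    intro γ hγ
    obtain ⟨j0, hj0⟩ := Function.ne_iff.mp hγ
    have hj0' : 1 ≤ (γ j0 : ℝ) := by
      have : 1 ≤ γ j0 := Nat.one_le_iff_ne_zero.mpr hj0
      exact_mod_cast this
    have hsum : ∀ j, (γ j : ℝ) ^ 2 ≤ ∑ k, (γ k : ℝ) ^ 2 := fun j =>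
      Finset.single_le_sum (fun k _ => sq_nonneg ((γ k : ℝ))) (Finset.mem_univ j)
    constructor
    · have h1 : (1:ℝ) ≤ ∑ k, (γ k : ℝ) ^ 2 := le_trans (by nlinarith) (hsum j0)
      calc (1:ℝ) = Real.sqrt 1 := Real.sqrt_one.symm
      _ ≤ _ := Real.sqrt_le_sqrt h1
    · intro j
      calc (γ j : ℝ) = Real.sqrt ((γ j : ℝ) ^ 2) := (Real.sqrt_sq (Nat.cast_nonneg _)).symm
      _ ≤ _ := Real.sqrt_le_sqrt (hsum j)
  obtain ⟨hsα1, hαle⟩ := sqrt_facts α hα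
  obtain ⟨hsβ1, hβle⟩ := sqrt_facts β hβ
  have hsαpos : 0 < Real.sqrt (∑ j, (α j : ℝ) ^ 2) := lt_of_lt_of_le one_pos hsα1
  have hsβpos : 0 < Real.sqrt (∑ j, (β j : ℝ) ^ 2) := lt_of_lt_of_le one_pos hsβ1
  have hωα : 2 * ω < 1 / Real.sqrt (∑ j, (α j : ℝ) ^ 2) := lt_of_lt_of_le hω2 (min_le_left _ _)
  have hωβ : 2 * ω < 1 / Real.sqrt (∑ j, (β j : ℝ) ^ 2) := lt_of_lt_of_le hω2 (min_le_right _ _)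
  have hω1 : ω ≤ 1 := by
    have : 1 / Real.sqrt (∑ j, (α j : ℝ) ^ 2) ≤ 1 := by
      rw [div_le_one hsαpos]; exact hsα1
    linarith
  have hαω : ∀ j, 2 * ω * (α j : ℝ) < 1 := by
    intro j
    calc 2 * ω * (α j : ℝ) ≤ 2 * ω * Real.sqrt (∑ j, (α j : ℝ) ^ 2) := by
          have h2ω : 0 ≤ 2 * ω := by linarith
          exact mul_le_mul_of_nonneg_left (hαle j) h2ω
      _ < (1 / Real.sqrt (∑ j, (α j : ℝ) ^ 2)) * Real.sqrt (∑ j, (α j : ℝ) ^ 2) :=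
          mul_lt_mul_of_pos_right hωα hsαpos
      _ = 1 := by field_simp
  have hβω : ∀ j, 2 * ω * (β j : ℝ) < 1 := by
    intro j
    calc 2 * ω * (β j : ℝ) ≤ 2 * ω * Real.sqrt (∑ j, (β j : ℝ) ^ 2) := by
          have h2ω : 0 ≤ 2 * ω := by linarith
          exact mul_le_mul_of_nonneg_left (hβle j) h2ω
      _ < (1 / Real.sqrt (∑ j, (β j : ℝ) ^ 2)) * Real.sqrt (∑ j, (β j : ℝ) ^ 2) :=
          mul_lt_mul_of_pos_right hωβ hsβpos
      _ = 1 := by field_simp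
  -- the two constants
  set Iα : ENNReal := ∏ j, ∫⁻ z : ℂ, (Metric.ball (0:ℂ) 1).indicator
      (fun w => ENNReal.ofReal (‖w‖ ^ (-(2 * ω * (α j : ℝ) + 1)))) z with hIα
  set Iβ : ENNReal := ∏ j, ∫⁻ z : ℂ, (Metric.ball (0:ℂ) 1).indicator
      (fun w => ENNReal.ofReal (‖w‖ ^ (-(2 * ω * (β j : ℝ) + 1)))) z with hIβ
  have hfin : ∀ (γ : Fin n → ℕ), (∀ j, 2 * ω * (γ j : ℝ) < 1) →
      (∏ j, ∫⁻ z : ℂ, (Metric.ball (0:ℂ) 1).indicator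
        (fun w => ENNReal.ofReal (‖w‖ ^ (-(2 * ω * (γ j : ℝ) + 1)))) z) ≠ ⊤ := by
    intro γ hγ
    refine (ENNReal.prod_lt_top fun j _ => ?_).ne
    rw [lintegral_indicator measurableSet_ball]
    have hc0 : 0 < 2 * ω * (γ j : ℝ) + 1 := by positivity
    have hc2 : 2 * ω * (γ j : ℝ) + 1 < 2 := by have := hγ j; linarith
    exact my_onedim hc0 hc2
  have hIαfin : Iα ≠ ⊤ := hfin α hαω
  have hIβfin : Iβ ≠ ⊤ := hfin β hβω
  refine ⟨max Iα.toReal Iβ.toReal + 1, ?_, ?_⟩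
  · have : (0:ℝ) ≤ max Iα.toReal Iβ.toReal :=
      le_trans ENNReal.toReal_nonneg (le_max_left _ _)
    linarith
  intro ε₁ h1 ε₂ h2
  set C : ℝ := max Iα.toReal Iβ.toReal + 1 with hC
  have hsqrt : Real.sqrt (ε₁ ^ 2 + ε₂ ^ 2) ^ ω ≥ 0 :=
    Real.rpow_nonneg (Real.sqrt_nonneg _) _
  rcases le_total ε₂ ε₁ with hle | hle
  · -- ε₂ ≤ ε₁ : use the α bound
    refine (my_aux α β ω hω hω1 h1 h2).trans ?_
    rw [← hIα]
    calc ENNReal.ofReal (ε₁ ^ ω) * Iα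
        = ENNReal.ofReal (ε₁ ^ ω) * ENNReal.ofReal Iα.toReal := by
          rw [ENNReal.ofReal_toReal hIαfin]
      _ = ENNReal.ofReal (ε₁ ^ ω * Iα.toReal) := by
          rw [ENNReal.ofReal_mul (Real.rpow_nonneg h1.1.le _)]
      _ ≤ ENNReal.ofReal (C * Real.sqrt (ε₁ ^ 2 + ε₂ ^ 2) ^ ω) := by
          apply ENNReal.ofReal_le_ofReal
          have hε₁sqrt : ε₁ ≤ Real.sqrt (ε₁ ^ 2 + ε₂ ^ 2) := by
            calc ε₁ = Real.sqrt (ε₁ ^ 2) := (Real.sqrt_sq h1.1.le).symm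
            _ ≤ _ := Real.sqrt_le_sqrt (by nlinarith)
          have hr : ε₁ ^ ω ≤ Real.sqrt (ε₁ ^ 2 + ε₂ ^ 2) ^ ω :=
            Real.rpow_le_rpow h1.1.le hε₁sqrt hω.le
          have hCle : Iα.toReal ≤ C := by
            have := le_max_left Iα.toReal Iβ.toReal
            rw [hC]; linarith
          calc ε₁ ^ ω * Iα.toReal
              ≤ Real.sqrt (ε₁ ^ 2 + ε₂ ^ 2) ^ ω * C :=
                mul_le_mul hr hCle ENNReal.toReal_nonneg hsqrt
            _ = C * Real.sqrt (ε₁ ^ 2 + ε₂ ^ 2) ^ ω := mul_comm _ _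
  · -- ε₁ ≤ ε₂ : use the β bound, after swapping
    have hswap : (∫⁻ ζ in {ζ : Fin n → ℂ | (∀ j, ‖ζ j‖ < 1) ∧
          ε₁ ≤ ‖∏ j, ζ j ^ α j‖ ^ 2 ∧
          ε₂ ≤ ‖∏ j, ζ j ^ β j‖ ^ 2},
        ENNReal.ofReal ((ε₁ * ε₂ /
            (‖∏ j, ζ j ^ α j‖ ^ 2 * ‖∏ j, ζ j ^ β j‖ ^ 2)) *
          ∏ j, (‖ζ j‖)⁻¹))
        = (∫⁻ ζ in {ζ : Fin n → ℂ | (∀ j, ‖ζ j‖ < 1) ∧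
          ε₂ ≤ ‖∏ j, ζ j ^ β j‖ ^ 2 ∧
          ε₁ ≤ ‖∏ j, ζ j ^ α j‖ ^ 2},
        ENNReal.ofReal ((ε₂ * ε₁ /
            (‖∏ j, ζ j ^ β j‖ ^ 2 * ‖∏ j, ζ j ^ α j‖ ^ 2)) *
          ∏ j, (‖ζ j‖)⁻¹)) := by
      rw [show {ζ : Fin n → ℂ | (∀ j, ‖ζ j‖ < 1) ∧
          ε₁ ≤ ‖∏ j, ζ j ^ α j‖ ^ 2 ∧
          ε₂ ≤ ‖∏ j, ζ j ^ β j‖ ^ 2}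
        = {ζ : Fin n → ℂ | (∀ j, ‖ζ j‖ < 1) ∧
          ε₂ ≤ ‖∏ j, ζ j ^ β j‖ ^ 2 ∧
          ε₁ ≤ ‖∏ j, ζ j ^ α j‖ ^ 2} from by ext ζ; simp only [mem_setOf_eq]; tauto]
      refine lintegral_congr fun ζ => ?_
      congr 1
      ring
    rw [hswap]
    refine (my_aux β α ω hω hω1 h2 h1).trans ?_
    rw [← hIβ]
    calc ENNReal.ofReal (ε₂ ^ ω) * Iβ
        = ENNReal.ofReal (ε₂ ^ ω) * ENNReal.ofReal Iβ.toReal := by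
          rw [ENNReal.ofReal_toReal hIβfin]
      _ = ENNReal.ofReal (ε₂ ^ ω * Iβ.toReal) := by
          rw [ENNReal.ofReal_mul (Real.rpow_nonneg h2.1.le _)]
      _ ≤ ENNReal.ofReal (C * Real.sqrt (ε₁ ^ 2 + ε₂ ^ 2) ^ ω) := by
          apply ENNReal.ofReal_le_ofReal
          have hε₂sqrt : ε₂ ≤ Real.sqrt (ε₁ ^ 2 + ε₂ ^ 2) := by
            calc ε₂ = Real.sqrt (ε₂ ^ 2) := (Real.sqrt_sq h2.1.le).symm
            _ ≤ _ := Real.sqrt_le_sqrt (by nlinarith)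
          have hr : ε₂ ^ ω ≤ Real.sqrt (ε₁ ^ 2 + ε₂ ^ 2) ^ ω :=
            Real.rpow_le_rpow h2.1.le hε₂sqrt hω.le
          have hCle : Iβ.toReal ≤ C := by
            have := le_max_right Iα.toReal Iβ.toReal
            rw [hC]; linarith
          calc ε₂ ^ ω * Iβ.toReal
              ≤ Real.sqrt (ε₁ ^ 2 + ε₂ ^ 2) ^ ω * C :=
                mul_le_mul hr hCle ENNReal.toReal_nonneg hsqrt
            _ = C * Real.sqrt (ε₁ ^ 2 + ε₂ ^ 2) ^ ω := mul_comm _ _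
end

section
/- Let Δ be the open unit polydisc in ℂ². There is a constant C > 0 such that for all ε ∈ (0,1], ∫_Δ (1/|ζ₁|) · (|ζ₁|⁸/ε) / (1 + |ζ₁|⁸/ε)² dλ(ζ) ≤ C · ε^{1/8}. -/
open MeasureTheory Set

lemma vol_prod_ball (R : ℝ) (hR : 0 ≤ R) :
    volume (Metric.ball (0:ℂ) R ×ˢ Metric.ball (0:ℂ) 1) =
      ENNReal.ofReal (R ^ 2 * (Real.pi * Real.pi)) := by
  have hpi : ((NNReal.pi : NNReal) : ENNReal) = ENNReal.ofReal Real.pi := by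
    rw [← NNReal.coe_real_pi, ENNReal.ofReal_coe_nnreal]
  rw [Measure.volume_eq_prod, Measure.prod_prod, Complex.volume_ball, Complex.volume_ball, hpi,
    ← ENNReal.ofReal_pow hR, ← ENNReal.ofReal_pow zero_le_one,
    ← ENNReal.ofReal_mul (by positivity : (0:ℝ) ≤ R ^ 2),
    ← ENNReal.ofReal_mul (by positivity : (0:ℝ) ≤ (1:ℝ) ^ 2),
    ← ENNReal.ofReal_mul (by positivity : (0:ℝ) ≤ R ^ 2 * Real.pi)]
  congr 1
  ring

lemma key1 {ε r : ℝ} (hε : 0 < ε) (hr : 0 ≤ r) :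
    r⁻¹ * (r ^ 8 / ε) / (1 + r ^ 8 / ε) ^ 2 ≤ r ^ 7 / ε := by
  have h1 : r⁻¹ * (r ^ 8 / ε) = r ^ 7 / ε := by
    rcases eq_or_ne r 0 with h | h
    · simp [h]
    · field_simp
  rw [h1]
  refine div_le_self (by positivity) ?_
  nlinarith [pow_nonneg hr 8, div_nonneg (pow_nonneg hr 8) hε.le]

lemma key2 {ε r : ℝ} (hε : 0 < ε) (hr : 0 < r) :
    r⁻¹ * (r ^ 8 / ε) / (1 + r ^ 8 / ε) ^ 2 ≤ ε / r ^ 9 := by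
  have ht : 0 < r ^ 8 / ε := by positivity
  have h1 : r⁻¹ * (r ^ 8 / ε) = r ^ 7 / ε := by field_simp
  rw [h1]
  have h2 : r ^ 7 / ε / (1 + r ^ 8 / ε) ^ 2 ≤ r ^ 7 / ε / (r ^ 8 / ε) ^ 2 :=
    div_le_div_of_nonneg_left (by positivity) (by positivity) (by nlinarith)
  refine h2.trans_eq ?_
  field_simp

/-- There is C > 0 such that for all ε ∈ (0,1],
∫_Δ (1/|ζ₁|)·(|ζ₁|⁸/ε)/(1+|ζ₁|⁸/ε)² dλ(ζ) ≤ C·ε^(1/8), where Δ is the open unit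
polydisc in ℂ². -/
theorem stmt_18 :
    ∃ C > (0:ℝ), ∀ ε ∈ Ioc (0:ℝ) 1,
      (∫⁻ ζ in {ζ : ℂ × ℂ | ‖ζ.1‖ < 1 ∧ ‖ζ.2‖ < 1},
        ENNReal.ofReal ((‖ζ.1‖)⁻¹ * (‖ζ.1‖ ^ 8 / ε) /
          (1 + ‖ζ.1‖ ^ 8 / ε) ^ 2)) ≤
      ENNReal.ofReal (C * ε ^ ((1:ℝ)/8)) := by
  refine ⟨100, by norm_num, ?_⟩
  rintro ε ⟨hε0, hε1⟩
  set δ : ℝ := ε ^ ((1:ℝ)/8) with hδ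
  have hδ0 : 0 < δ := Real.rpow_pos_of_pos hε0 _
  have hδ1 : δ ≤ 1 := Real.rpow_le_one hε0.le hε1 (by norm_num)
  have hd7 : ε ^ ((1:ℝ)/8) * δ ^ 7 = ε := by
    rw [hδ, ← Real.rpow_natCast (ε ^ ((1:ℝ)/8)) 7, ← Real.rpow_mul hε0.le,
      ← Real.rpow_add hε0]
    norm_num
  set f : ℂ × ℂ → ENNReal := fun ζ =>
    ENNReal.ofReal ((‖ζ.1‖)⁻¹ * (‖ζ.1‖ ^ 8 / ε) /
      (1 + ‖ζ.1‖ ^ 8 / ε) ^ 2) with hf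
  set V : ℕ → Set (ℂ × ℂ) := fun k =>
    match k with
    | 0 => Metric.ball (0:ℂ) δ ×ˢ Metric.ball (0:ℂ) 1
    | k + 1 => (Metric.ball (0:ℂ) (δ * 2 ^ (k+1)) \ Metric.ball (0:ℂ) (δ * 2 ^ k)) ×ˢ
        Metric.ball (0:ℂ) 1 with hV
  set b : ℕ → ℝ := fun k =>
    match k with
    | 0 => Real.pi ^ 2 * ε ^ ((1:ℝ)/8) * 1
    | k + 1 => Real.pi ^ 2 * ε ^ ((1:ℝ)/8) * (4 * (1/128) ^ k) with hb
  -- cover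
  have hcover : {ζ : ℂ × ℂ | ‖ζ.1‖ < 1 ∧ ‖ζ.2‖ < 1} ⊆ ⋃ k, V k := by
    rintro ζ ⟨h1, h2⟩
    rcases lt_or_ge (‖ζ.1‖) δ with h | h
    · refine mem_iUnion.2 ⟨0, ?_⟩
      simp only [hV, Set.mem_prod, Metric.mem_ball, Complex.dist_eq, sub_zero]
      exact ⟨h, h2⟩
    · have hx : 1 ≤ ‖ζ.1‖ / δ := (one_le_div hδ0).2 h
      obtain ⟨n, hn1, hn2⟩ := exists_nat_pow_near hx one_lt_two
      refine mem_iUnion.2 ⟨n + 1, ?_⟩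
      have hl : δ * 2 ^ n ≤ ‖ζ.1‖ := by
        rw [mul_comm]
        exact (le_div_iff₀ hδ0).1 hn1
      have hu : ‖ζ.1‖ < δ * 2 ^ (n + 1) := by
        rw [mul_comm]
        exact (div_lt_iff₀ hδ0).1 hn2
      simp only [hV, Set.mem_prod, Set.mem_diff, Metric.mem_ball, Complex.dist_eq, sub_zero]
      exact ⟨⟨hu, not_lt.2 hl⟩, h2⟩
  -- per-piece bounds
  have hpiece : ∀ k, (∫⁻ ζ in V k, f ζ) ≤ ENNReal.ofReal (b k) := by
    intro k
    match k with
    | 0 =>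
      have hmono : (∫⁻ ζ in V 0, f ζ) ≤ ∫⁻ _ in V 0, ENNReal.ofReal (δ ^ 7 / ε) := by
        refine setLIntegral_mono measurable_const ?_
        intro ζ hζ
        have hr : ‖ζ.1‖ < δ := by
          simpa [hV, Metric.mem_ball, Complex.dist_eq] using hζ.1
        refine ENNReal.ofReal_le_ofReal ?_
        refine (key1 hε0 (norm_nonneg _)).trans ?_
        gcongr
      refine hmono.trans ?_
      rw [setLIntegral_const, vol_prod_ball δ hδ0.le,
        ← ENNReal.ofReal_mul (by positivity)]
      refine ENNReal.ofReal_le_ofReal ?_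
      have heq : δ ^ 7 / ε * (δ ^ 2 * (Real.pi * Real.pi)) =
          (ε ^ ((1:ℝ)/8) * δ ^ 7) / ε * (ε ^ ((1:ℝ)/8) * (Real.pi * Real.pi)) := by
        rw [hδ]; ring
      rw [heq, hd7, div_self hε0.ne']
      simp only [hb]
      nlinarith [Real.pi_pos]
    | k + 1 =>
      have hmono : (∫⁻ ζ in V (k+1), f ζ) ≤
          ∫⁻ _ in V (k+1), ENNReal.ofReal (ε / (δ * 2 ^ k) ^ 9) := by
        refine setLIntegral_mono measurable_const ?_
        intro ζ hζ
        have hζ1 := hζ.1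
        simp only [hV, Set.mem_diff, Metric.mem_ball, Complex.dist_eq, sub_zero, not_lt] at hζ1
        have hl : δ * 2 ^ k ≤ ‖ζ.1‖ := hζ1.2
        have hrp : 0 < ‖ζ.1‖ := lt_of_lt_of_le (by positivity) hl
        refine ENNReal.ofReal_le_ofReal ?_
        refine (key2 hε0 hrp).trans ?_
        gcongr
      refine hmono.trans ?_
      rw [setLIntegral_const]
      have hsub : V (k+1) ⊆ Metric.ball (0:ℂ) (δ * 2 ^ (k+1)) ×ˢ Metric.ball (0:ℂ) 1 :=
        Set.prod_mono diff_subset subset_rfl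
      calc ENNReal.ofReal (ε / (δ * 2 ^ k) ^ 9) * volume (V (k+1))
          ≤ ENNReal.ofReal (ε / (δ * 2 ^ k) ^ 9) *
            volume (Metric.ball (0:ℂ) (δ * 2 ^ (k+1)) ×ˢ Metric.ball (0:ℂ) 1) :=
            mul_le_mul_right (measure_mono hsub) _
        _ = ENNReal.ofReal (ε / (δ * 2 ^ k) ^ 9 *
              ((δ * 2 ^ (k+1)) ^ 2 * (Real.pi * Real.pi))) := by
            rw [vol_prod_ball _ (by positivity), ← ENNReal.ofReal_mul (by positivity)]
        _ ≤ ENNReal.ofReal (b (k+1)) := by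
            refine ENNReal.ofReal_le_ofReal (le_of_eq ?_)
            have h128 : ((1:ℝ)/128) ^ k = (1/(2 ^ k : ℝ)) ^ 7 := by
              rw [div_pow, div_pow, one_pow, one_pow, ← pow_mul, mul_comm k 7, pow_mul]
              norm_num
            simp only [hb, h128]
            field_simp
            linear_combination (-(4 * ((2:ℝ)^k)^2)) * hd7
  -- summing
  have hsum : (∫⁻ ζ in {ζ : ℂ × ℂ | ‖ζ.1‖ < 1 ∧ ‖ζ.2‖ < 1}, f ζ) ≤
      ∑' k, ENNReal.ofReal (b k) :=
    le_trans (lintegral_mono_set hcover) (le_trans (lintegral_iUnion_le V f)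
      (ENNReal.tsum_le_tsum hpiece))
  refine hsum.trans ?_
  have hb_nonneg : ∀ k, 0 ≤ b k := by
    intro k
    match k with
    | 0 => simp only [hb]; positivity
    | k + 1 => simp only [hb]; positivity
  have hsummable_shift : Summable (fun k => b (k + 1)) := by
    simp only [hb]
    exact ((summable_geometric_of_lt_one (by norm_num) (by norm_num)).mul_left _).mul_left _
  have hsummable : Summable b := (summable_nat_add_iff 1).1 hsummable_shift
  rw [← ENNReal.ofReal_tsum_of_nonneg hb_nonneg hsummable]
  refine ENNReal.ofReal_le_ofReal ?_
  rw [Summable.tsum_eq_zero_add hsummable]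
  have htail : ∑' k, b (k + 1) = Real.pi ^ 2 * ε ^ ((1:ℝ)/8) * (4 * (1 - 1/128)⁻¹) := by
    simp only [hb]
    rw [tsum_mul_left, tsum_mul_left, tsum_geometric_of_lt_one (by norm_num) (by norm_num)]
  rw [htail]
  have hπ2 : Real.pi ^ 2 ≤ 16 := by nlinarith [Real.pi_pos, Real.pi_le_four]
  have h127 : ((1:ℝ) - 1/128)⁻¹ = 128/127 := by norm_num
  rw [h127]
  have hb0 : b 0 = Real.pi ^ 2 * ε ^ ((1:ℝ)/8) * 1 := rfl
  rw [hb0]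
  nlinarith [mul_le_mul_of_nonneg_right hπ2 hδ0.le, hδ0.le]
end
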